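/- arXiv:1611.09669 — 6 statements merged into one kernel-verified Lean document; each statement's English description precedes it below -/
import Mathlib

section
/- Let α be an n×n real matrix and β an m×n real matrix such that the pair (α,β) is observable, i.e. the kernel of the stacked observability matrix (β; βα; …; βα^{n−1}) is zero. Then there exists a constant K > 0, depending only on α and β, such that for every interval I ⊂ ℝ of integer length T ≥ 1, every locally integrable f : I → ℝⁿ, and every differentiable z : I → ℝⁿ satisfying z′(t) = α z(t) + f(t) for all t ∈ I, one has ∫_I ‖z(t)‖ dt ≤ K ( ∫_I ‖β z(t)‖ dt + ∫_I ‖f(t)‖ dt ). The constant K does not depend on the length T of the interval. -/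
open MeasureTheory

open MeasureTheory intervalIntegral NormedSpace Set

set_option linter.unusedSectionVars false
set_option synthInstance.maxHeartbeats 1000000
set_option maxHeartbeats 1000000

variable {E : Type*} [NormedAddCommGroup E] [NormedSpace ℝ E] [CompleteSpace E]
variable {F : Type*} [NormedAddCommGroup F] [NormedSpace ℝ F]

noncomputable def eA (A : E →L[ℝ] E) (s : ℝ) : E →L[ℝ] E := exp (s • A)

lemma eA_cont (A : E →L[ℝ] E) : Continuous (eA A) := by
  letI : NormedAlgebra ℚ (E →L[ℝ] E) := .restrictScalars ℚ ℝ _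
  exact exp_continuous.comp (continuous_id.smul continuous_const)

lemma eA_zero (A : E →L[ℝ] E) : eA A 0 = 1 := by simp [eA, exp_zero]

lemma eA_add (A : E →L[ℝ] E) (s t : ℝ) : eA A (s + t) = eA A s * eA A t := by
  rw [eA, add_smul]
  letI : NormedAlgebra ℚ (E →L[ℝ] E) := .restrictScalars ℚ ℝ _
  refine exp_add_of_commute ?_
  simp only [Commute, SemiconjBy, smul_mul_smul_comm, mul_comm s t]

lemma eA_cancel (A : E →L[ℝ] E) (s : ℝ) (v : E) : eA A s (eA A (-s) v) = v := by
  have h : eA A s * eA A (-s) = 1 := by rw [← eA_add]; simp [eA_zero]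
  have := congrArg (fun L : E →L[ℝ] E => L v) h
  simpa [ContinuousLinearMap.mul_apply] using this

lemma hasDerivAt_eA (A : E →L[ℝ] E) (s : ℝ) :
    HasDerivAt (eA A) (eA A s * A) s := hasDerivAt_exp_smul_const A s

lemma intervalIntegrable_clm_apply (Φ : ℝ → (E →L[ℝ] F)) (hΦ : Continuous Φ)
    (f : ℝ → E) {u v : ℝ} (hf : IntegrableOn f (Icc u v))
    {c d : ℝ} (h1 : uIcc c d ⊆ Icc u v) :
    IntervalIntegrable (fun s => Φ s (f s)) volume c d := by
  rw [intervalIntegrable_iff]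
  have hf' : IntegrableOn f (uIoc c d) := hf.mono_set (uIoc_subset_uIcc.trans h1)
  obtain ⟨C, hC⟩ := (isCompact_uIcc (a := c) (b := d)).exists_bound_of_continuousOn
    hΦ.continuousOn
  have hm : AEStronglyMeasurable (fun s => Φ s (f s)) (volume.restrict (uIoc c d)) := by
    exact isBoundedBilinearMap_apply.continuous.comp_aestronglyMeasurable
      ((hΦ.aestronglyMeasurable).prodMk hf'.aestronglyMeasurable)
  refine (hf'.norm.const_mul C).mono' hm ?_
  filter_upwards [ae_restrict_mem measurableSet_uIoc] with s hs
  calc ‖Φ s (f s)‖ ≤ ‖Φ s‖ * ‖f s‖ := (Φ s).le_opNorm (f s)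
    _ ≤ C * ‖f s‖ := by
        have := hC s (uIoc_subset_uIcc hs)
        exact mul_le_mul_of_nonneg_right this (norm_nonneg _)

lemma voc (A : E →L[ℝ] E) (f z : ℝ → E) (u v : ℝ)
    (hf : IntegrableOn f (Icc u v))
    (hz : ∀ t ∈ Icc u v, HasDerivAt z (A (z t) + f t) t)
    (c t : ℝ) (hc : u ≤ c) (hct : c ≤ t) (htv : t ≤ v) :
    z t = eA A (t - c) (z c) + eA A (t - c) (∫ s in c..t, eA A (c - s) (f s)) := by
  have key : (∫ s in c..t, eA A (c - s) (f s))
      = eA A (c - t) (z t) - eA A (c - c) (z c) := by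
    apply intervalIntegral.integral_eq_sub_of_hasDerivAt
    · intro s hs
      rw [uIcc_of_le hct] at hs
      have hzs := hz s ⟨hc.trans hs.1, hs.2.trans htv⟩
      have h1 : HasDerivAt (fun τ => eA A (c - τ)) (-(eA A (c - s) * A)) s := by
        have hh : HasDerivAt (fun τ : ℝ => c - τ) (-1 : ℝ) s := by
          simpa using (hasDerivAt_id s).const_sub c
        have := (hasDerivAt_eA A (c - s)).scomp s hh
        simpa [Function.comp_def] using this
      have h2 := h1.clm_apply hzs
      convert h2 using 1
      simp [ContinuousLinearMap.mul_apply, ContinuousLinearMap.neg_apply, map_add]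
    · exact intervalIntegrable_clm_apply (fun s => eA A (c - s))
        ((eA_cont A).comp (continuous_const.sub continuous_id)) f hf
        (by rw [uIcc_of_le hct]; exact Icc_subset_Icc hc htv)
  have hct' : eA A (t - c) (eA A (c - t) (z t)) = z t := by
    have : c - t = -(t - c) := by ring
    rw [this]; exact eA_cancel A (t - c) (z t)
  have := congrArg (fun w => eA A (t - c) w) key
  simp only [map_sub] at this
  rw [hct'] at this
  have h0 : eA A (c - c) (z c) = z c := by simp [eA_zero]
  rw [h0] at this
  rw [this]; abel

/-- The a priori estimate on a single unit interval. -/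
lemma unit_interval_estimate
    (A : E →L[ℝ] E) (B : E →L[ℝ] F)
    (M c₀ : ℝ) (hM1 : 1 ≤ M) (hM : ∀ s ∈ Icc (-1:ℝ) 1, ‖eA A s‖ ≤ M)
    (hc₀ : 0 < c₀) (hcoer : ∀ v : E, c₀ * ‖v‖ ≤ ∫ s in (0:ℝ)..1, ‖B (eA A s v)‖)
    (u v : ℝ) (f z : ℝ → E)
    (hf : IntegrableOn f (Icc u v))
    (hz : ∀ t ∈ Icc u v, HasDerivAt z (A (z t) + f t) t)
    (c : ℝ) (hc : u ≤ c) (hcv : c + 1 ≤ v) :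
    ∫ t in c..c+1, ‖z t‖ ≤
      (M / c₀) * ((∫ t in c..c+1, ‖B (z t)‖) + ‖B‖ * (M * (M * ∫ s in c..c+1, ‖f s‖)))
      + M * (M * ∫ s in c..c+1, ‖f s‖) := by
  have hM0 : (0:ℝ) < M := lt_of_lt_of_le one_pos hM1
  have hc1 : c ≤ c + 1 := by linarith
  have hsub : Icc c (c+1) ⊆ Icc u v := Icc_subset_Icc hc (by linarith)
  set Fv := ∫ s in c..c+1, ‖f s‖ with hFv
  have hfI : IntervalIntegrable f volume c (c+1) :=
    (hf.mono_set (by rw [uIcc_of_le hc1]; exact hsub)).intervalIntegrable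
  have hFnn : 0 ≤ Fv :=
    intervalIntegral.integral_nonneg hc1 (fun s _ => norm_nonneg _)
  have hzc : ContinuousOn z (Icc u v) := fun t ht =>
    ((hz t ht).continuousAt).continuousWithinAt
  -- bound the Duhamel term
  have hdu : ∀ t ∈ Icc c (c+1), ‖∫ s in c..t, eA A (c - s) (f s)‖ ≤ M * Fv := by
    intro t ht
    have hct : c ≤ t := ht.1
    have hsub' : uIcc c t ⊆ Icc u v := by
      rw [uIcc_of_le hct]; exact (Icc_subset_Icc_right ht.2).trans hsub
    have h1 : ‖∫ s in c..t, eA A (c-s) (f s)‖ ≤ ∫ s in c..t, ‖eA A (c-s) (f s)‖ :=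
      intervalIntegral.norm_integral_le_integral_norm hct
    have h2 : (∫ s in c..t, ‖eA A (c-s) (f s)‖) ≤ ∫ s in c..t, M * ‖f s‖ := by
      refine intervalIntegral.integral_mono_on hct
        ((intervalIntegrable_clm_apply (fun s => eA A (c - s))
          ((eA_cont A).comp (continuous_const.sub continuous_id)) f hf hsub').norm)
        (((hf.mono_set hsub').intervalIntegrable).norm.const_mul M) ?_
      intro s hs
      calc ‖eA A (c - s) (f s)‖ ≤ ‖eA A (c - s)‖ * ‖f s‖ := (eA A (c-s)).le_opNorm _
        _ ≤ M * ‖f s‖ := by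
            refine mul_le_mul_of_nonneg_right (hM _ ⟨?_, ?_⟩) (norm_nonneg _)
            · have := hs.2; have := ht.2; linarith
            · have := hs.1; linarith
    have h3 : (∫ s in c..t, M * ‖f s‖) = M * ∫ s in c..t, ‖f s‖ :=
      intervalIntegral.integral_const_mul _ _
    have h4 : (∫ s in c..t, ‖f s‖) ≤ Fv := by
      refine intervalIntegral.integral_mono_interval le_rfl hct ht.2 ?_ hfI.norm
      filter_upwards with s; exact norm_nonneg _
    calc ‖∫ s in c..t, eA A (c-s) (f s)‖ ≤ ∫ s in c..t, ‖eA A (c-s) (f s)‖ := h1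
      _ ≤ M * ∫ s in c..t, ‖f s‖ := by rw [← h3]; exact h2
      _ ≤ M * Fv := mul_le_mul_of_nonneg_left h4 hM0.le
  have hvoc : ∀ t ∈ Icc c (c+1),
      z t = eA A (t-c) (z c) + eA A (t-c) (∫ s in c..t, eA A (c-s) (f s)) :=
    fun t ht => voc A f z u v hf hz c t hc ht.1 (le_trans ht.2 (by linarith))
  have hMt : ∀ t ∈ Icc c (c+1), ‖eA A (t - c)‖ ≤ M := by
    intro t ht
    refine hM _ ⟨by linarith [ht.1], by linarith [ht.2]⟩
  -- pointwise bound on ‖z t‖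
  have hzb : ∀ t ∈ Icc c (c+1), ‖z t‖ ≤ M * ‖z c‖ + M * (M * Fv) := by
    intro t ht
    rw [hvoc t ht]
    calc ‖eA A (t-c) (z c) + eA A (t-c) (∫ s in c..t, eA A (c-s) (f s))‖
        ≤ ‖eA A (t-c) (z c)‖ + ‖eA A (t-c) (∫ s in c..t, eA A (c-s) (f s))‖ :=
          norm_add_le _ _
      _ ≤ M * ‖z c‖ + M * (M * Fv) := by
          gcongr
          · calc ‖eA A (t-c) (z c)‖ ≤ ‖eA A (t-c)‖ * ‖z c‖ := (eA A _).le_opNorm _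
              _ ≤ M * ‖z c‖ := mul_le_mul_of_nonneg_right (hMt t ht) (norm_nonneg _)
          · calc ‖eA A (t-c) (∫ s in c..t, eA A (c-s) (f s))‖
                ≤ ‖eA A (t-c)‖ * ‖∫ s in c..t, eA A (c-s) (f s)‖ := (eA A _).le_opNorm _
              _ ≤ M * (M * Fv) := by
                  have := hdu t ht
                  have := hMt t ht
                  nlinarith [norm_nonneg (∫ s in c..t, eA A (c-s) (f s)),
                    norm_nonneg (eA A (t-c))]
  -- integral bound on ∫ ‖z‖
  have hzint : (∫ t in c..c+1, ‖z t‖) ≤ M * ‖z c‖ + M * (M * Fv) := by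
    have huIcc : uIcc c (c+1) = Icc c (c+1) := uIcc_of_le hc1
    have := intervalIntegral.integral_mono_on hc1
      ((huIcc.symm ▸ (hzc.mono hsub).norm).intervalIntegrable)
      (intervalIntegrable_const (μ := volume)) hzb
    simpa using this
  -- bound on the observability integral of z c
  have hBb : ∀ t ∈ Icc c (c+1),
      ‖B (eA A (t-c) (z c))‖ ≤ ‖B (z t)‖ + ‖B‖ * (M * (M * Fv)) := by
    intro t ht
    have hveq := hvoc t ht
    have : B (eA A (t-c) (z c)) = B (z t) - B (eA A (t-c) (∫ s in c..t, eA A (c-s) (f s))) := by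
      rw [hveq]; simp [map_add]
    rw [this]
    calc ‖B (z t) - B (eA A (t-c) (∫ s in c..t, eA A (c-s) (f s)))‖
        ≤ ‖B (z t)‖ + ‖B (eA A (t-c) (∫ s in c..t, eA A (c-s) (f s)))‖ := norm_sub_le _ _
      _ ≤ ‖B (z t)‖ + ‖B‖ * (M * (M * Fv)) := by
          gcongr
          calc ‖B (eA A (t-c) (∫ s in c..t, eA A (c-s) (f s)))‖
              ≤ ‖B‖ * ‖eA A (t-c) (∫ s in c..t, eA A (c-s) (f s))‖ := B.le_opNorm _
            _ ≤ ‖B‖ * (M * (M * Fv)) := by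
                refine mul_le_mul_of_nonneg_left ?_ (norm_nonneg _)
                calc ‖eA A (t-c) (∫ s in c..t, eA A (c-s) (f s))‖
                    ≤ ‖eA A (t-c)‖ * ‖∫ s in c..t, eA A (c-s) (f s)‖ := (eA A _).le_opNorm _
                  _ ≤ M * (M * Fv) := by
                      have := hdu t ht
                      have := hMt t ht
                      nlinarith [norm_nonneg (∫ s in c..t, eA A (c-s) (f s)),
                        norm_nonneg (eA A (t-c))]
  have hcomp : (∫ t in c..c+1, ‖B (eA A (t - c) (z c))‖)
      = ∫ s in (0:ℝ)..1, ‖B (eA A s (z c))‖ := by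
    have := intervalIntegral.integral_comp_sub_right
      (a := c) (b := c+1) (fun s => ‖B (eA A s (z c))‖) c
    simpa using this
  have hNz : c₀ * ‖z c‖ ≤ (∫ t in c..c+1, ‖B (z t)‖) + ‖B‖ * (M * (M * Fv)) := by
    have h1 : c₀ * ‖z c‖ ≤ ∫ s in (0:ℝ)..1, ‖B (eA A s (z c))‖ := hcoer (z c)
    rw [← hcomp] at h1
    refine h1.trans ?_
    have hcontB : ContinuousOn (fun t => ‖B (z t)‖) (Icc c (c+1)) :=
      ((B.continuous.comp_continuousOn (hzc.mono hsub)).norm)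
    have h2 : (∫ t in c..c+1, ‖B (eA A (t-c) (z c))‖)
        ≤ ∫ t in c..c+1, (‖B (z t)‖ + ‖B‖ * (M * (M * Fv))) := by
      have huIcc : uIcc c (c+1) = Icc c (c+1) := uIcc_of_le hc1
      refine intervalIntegral.integral_mono_on hc1 ?_ ?_ hBb
      · refine (Continuous.norm ?_).intervalIntegrable c (c+1)
        exact B.continuous.comp (isBoundedBilinearMap_apply.continuous.comp
          (((eA_cont A).comp (continuous_id.sub continuous_const)).prodMk continuous_const))
      · exact ((huIcc.symm ▸ hcontB).intervalIntegrable).add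
          (intervalIntegrable_const (μ := volume))
    refine h2.trans ?_
    have huIcc : uIcc c (c+1) = Icc c (c+1) := uIcc_of_le hc1
    rw [intervalIntegral.integral_add ((huIcc.symm ▸ hcontB).intervalIntegrable)
      (intervalIntegrable_const (μ := volume))]
    simp
  -- combine
  have hzc_le : ‖z c‖ ≤ ((∫ t in c..c+1, ‖B (z t)‖) + ‖B‖ * (M * (M * Fv))) / c₀ :=
    (le_div_iff₀ hc₀).mpr (by linarith [hNz])
  calc (∫ t in c..c+1, ‖z t‖) ≤ M * ‖z c‖ + M * (M * Fv) := hzint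
    _ ≤ M * (((∫ t in c..c+1, ‖B (z t)‖) + ‖B‖ * (M * (M * Fv))) / c₀) + M * (M * Fv) := by
        gcongr
    _ = (M / c₀) * ((∫ t in c..c+1, ‖B (z t)‖) + ‖B‖ * (M * (M * Fv))) + M * (M * Fv) := by
        ring

lemma eA_apply_cont (A : E →L[ℝ] E) (v : E) : Continuous fun s => eA A s v :=
  isBoundedBilinearMap_apply.continuous.comp ((eA_cont A).prodMk continuous_const)

lemma hasDerivAt_eA_apply (A : E →L[ℝ] E) (v : E) (s : ℝ) :
    HasDerivAt (fun s => eA A s v) (eA A s (A v)) s := by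
  have := (hasDerivAt_eA A s).clm_apply (hasDerivAt_const s v)
  simpa [ContinuousLinearMap.mul_apply] using this

/-- From vanishing of the observability integral, all `B (A^k v)` vanish. -/
lemma obs_zero (A : E →L[ℝ] E) (B : E →L[ℝ] F) (v : E)
    (h : (∫ s in (0:ℝ)..1, ‖B (eA A s v)‖) = 0) :
    ∀ k : ℕ, B ((A ^ k) v) = 0 := by
  -- step 1 : B (eA A s v) = 0 on Icc 0 1
  have contBA : ∀ w : E, Continuous fun s => B (eA A s w) := fun w =>
    B.continuous.comp (eA_apply_cont A w)
  have key0 : ∀ w : E,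
      ((∫ s in (0:ℝ)..1, ‖B (eA A s w)‖) = 0) → EqOn (fun s => B (eA A s w)) 0 (Icc 0 1) := by
    intro w hw
    set g : ℝ → ℝ := fun s => ‖B (eA A s w)‖ with hg
    have contg : Continuous g := (contBA w).norm
    set h : ℝ → ℝ := fun t => ∫ s in (0:ℝ)..t, g s with hh
    have hint : ∀ x y : ℝ, IntervalIntegrable g volume x y := fun x y =>
      contg.intervalIntegrable x y
    have h_nonneg : ∀ t ∈ Icc (0:ℝ) 1, 0 ≤ h t := fun t ht =>
      intervalIntegral.integral_nonneg ht.1 (fun s _ => norm_nonneg _)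
    have h_le : ∀ t ∈ Icc (0:ℝ) 1, h t ≤ h 1 := by
      intro t ht
      have : h 1 - h t = ∫ s in t..1, g s := by
        have hadj := intervalIntegral.integral_add_adjacent_intervals (hint 0 t) (hint t 1)
        simp only [hh]
        linarith [hadj]
      have hpos : 0 ≤ ∫ s in t..1, g s :=
        intervalIntegral.integral_nonneg ht.2 (fun s _ => norm_nonneg _)
      linarith [this ▸ hpos]
    have hzero : ∀ t ∈ Icc (0:ℝ) 1, h t = 0 := by
      intro t ht
      have h1 : h 1 = 0 := hw
      have := h_le t ht
      have := h_nonneg t ht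
      linarith
    -- on Ioo, g t = 0 by differentiating h
    have gIoo : ∀ t ∈ Ioo (0:ℝ) 1, g t = 0 := by
      intro t ht
      have hd : HasDerivAt h (g t) t :=
        intervalIntegral.integral_hasDerivAt_right (hint 0 t)
          (contg.stronglyMeasurable.stronglyMeasurableAtFilter) contg.continuousAt
      have hd0 : HasDerivAt h 0 t := by
        refine (hasDerivAt_const t (0:ℝ)).congr_of_eventuallyEq ?_
        filter_upwards [Ioo_mem_nhds ht.1 ht.2] with x hx
        exact hzero x (Ioo_subset_Icc_self hx)
      exact hd.unique hd0
    have gIcc : EqOn (fun s => B (eA A s w)) 0 (Icc 0 1) := by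
      have : EqOn (fun s => B (eA A s w)) 0 (Ioo 0 1) := by
        intro s hs
        have := gIoo s hs
        simpa [hg] using norm_eq_zero.mp this
      have hcl := this.closure (contBA w) continuous_const
      rwa [closure_Ioo (by norm_num : (0:ℝ) ≠ 1)] at hcl
    exact gIcc
  -- step 2 : induction on k
  have main : ∀ k : ℕ, EqOn (fun s => B (eA A s ((A ^ k) v))) 0 (Icc 0 1) := by
    intro k
    induction k with
    | zero => simpa using key0 v h
    | succ k ih =>
      have hIoo : ∀ s ∈ Ioo (0:ℝ) 1, B (eA A s ((A ^ (k+1)) v)) = 0 := by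
        intro s hs
        have hd : HasDerivAt (fun s => B (eA A s ((A ^ k) v)))
            (B (eA A s (A ((A ^ k) v)))) s :=
          B.hasFDerivAt.comp_hasDerivAt s (hasDerivAt_eA_apply A ((A ^ k) v) s)
        have hd0 : HasDerivAt (fun s => B (eA A s ((A ^ k) v))) 0 s := by
          refine (hasDerivAt_const s (0:F)).congr_of_eventuallyEq ?_
          filter_upwards [Ioo_mem_nhds hs.1 hs.2] with x hx
          exact ih (Ioo_subset_Icc_self hx)
        have := hd.unique hd0
        rw [pow_succ']
        simpa [ContinuousLinearMap.mul_apply] using this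
      have : EqOn (fun s => B (eA A s ((A ^ (k+1)) v))) 0 (Ioo 0 1) := fun s hs => hIoo s hs
      have hcl := this.closure (contBA _) continuous_const
      rwa [closure_Ioo (by norm_num : (0:ℝ) ≠ 1)] at hcl
  intro k
  have := main k ⟨le_refl 0, zero_le_one⟩
  simpa [eA_zero] using this

/-- Observability gives a coercive constant for the observability integral. -/
lemma obs_coercive (A : E →L[ℝ] E) (B : E →L[ℝ] F) [FiniteDimensional ℝ E]
    (hobs : ∀ v : E, (∀ k : ℕ, B ((A ^ k) v) = 0) → v = 0) :
    ∃ c₀ > (0:ℝ), ∀ v : E, c₀ * ‖v‖ ≤ ∫ s in (0:ℝ)..1, ‖B (eA A s v)‖ := by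
  set N : E → ℝ := fun v => ∫ s in (0:ℝ)..1, ‖B (eA A s v)‖ with hN
  have contInt : ∀ v : E, Continuous fun s => ‖B (eA A s v)‖ := fun v =>
    (B.continuous.comp (eA_apply_cont A v)).norm
  have hNpos : ∀ v : E, v ≠ 0 → 0 < N v := by
    intro v hv
    rcases lt_or_eq_of_le (intervalIntegral.integral_nonneg zero_le_one
      (fun s _ => norm_nonneg (B (eA A s v)))) with h | h
    · exact h
    · exact absurd (hobs v (obs_zero A B v h.symm)) hv
  -- continuity of N
  obtain ⟨M₁, hM₁⟩ := (isCompact_Icc (a := (0:ℝ)) (b := 1)).exists_bound_of_continuousOn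
    (eA_cont A).continuousOn
  have hM₁0 : 0 ≤ M₁ := le_trans (norm_nonneg _) (hM₁ 0 ⟨le_refl _, zero_le_one⟩)
  have hNlip : ∀ v w : E, |N v - N w| ≤ ‖B‖ * M₁ * ‖v - w‖ := by
    intro v w
    have hsub : N v - N w = ∫ s in (0:ℝ)..1, (‖B (eA A s v)‖ - ‖B (eA A s w)‖) := by
      rw [hN, intervalIntegral.integral_sub ((contInt v).intervalIntegrable 0 1)
        ((contInt w).intervalIntegrable 0 1)]
    rw [hsub]
    have h1 : |∫ s in (0:ℝ)..1, (‖B (eA A s v)‖ - ‖B (eA A s w)‖)|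
        ≤ ∫ s in (0:ℝ)..1, |‖B (eA A s v)‖ - ‖B (eA A s w)‖| := by
      simpa using intervalIntegral.norm_integral_le_integral_norm (f := fun s =>
        ‖B (eA A s v)‖ - ‖B (eA A s w)‖) (zero_le_one)
    refine h1.trans ?_
    have h2 : ∀ s ∈ Icc (0:ℝ) 1,
        |‖B (eA A s v)‖ - ‖B (eA A s w)‖| ≤ ‖B‖ * M₁ * ‖v - w‖ := by
      intro s hs
      have habs : |‖B (eA A s v)‖ - ‖B (eA A s w)‖| ≤ ‖B (eA A s v) - B (eA A s w)‖ :=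
        abs_norm_sub_norm_le _ _
      refine habs.trans ?_
      have : B (eA A s v) - B (eA A s w) = B (eA A s (v - w)) := by
        simp [map_sub]
      rw [this]
      calc ‖B (eA A s (v - w))‖ ≤ ‖B‖ * ‖eA A s (v - w)‖ := B.le_opNorm _
        _ ≤ ‖B‖ * (‖eA A s‖ * ‖v - w‖) :=
            mul_le_mul_of_nonneg_left ((eA A s).le_opNorm _) (norm_nonneg _)
        _ ≤ ‖B‖ * (M₁ * ‖v - w‖) := by
            refine mul_le_mul_of_nonneg_left ?_ (norm_nonneg _)
            exact mul_le_mul_of_nonneg_right (hM₁ s hs) (norm_nonneg _)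
        _ = ‖B‖ * M₁ * ‖v - w‖ := by ring
    calc (∫ s in (0:ℝ)..1, |‖B (eA A s v)‖ - ‖B (eA A s w)‖|)
        ≤ ∫ _s in (0:ℝ)..1, ‖B‖ * M₁ * ‖v - w‖ := by
          exact intervalIntegral.integral_mono_on zero_le_one
            ((((contInt v).sub (contInt w)).abs.intervalIntegrable 0 1))
            intervalIntegrable_const h2
      _ = ‖B‖ * M₁ * ‖v - w‖ := by simp
  have hNcont : Continuous N := by
    rw [Metric.continuous_iff]
    intro v ε hε
    by_cases hC : ‖B‖ * M₁ = 0
    · refine ⟨1, one_pos, fun w _ => ?_⟩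
      have := hNlip w v
      rw [hC, zero_mul] at this
      rw [Real.dist_eq]
      have habs : |N w - N v| ≤ 0 := this
      linarith [abs_nonneg (N w - N v), hε]
    · have hCpos : 0 < ‖B‖ * M₁ :=
        lt_of_le_of_ne (mul_nonneg (norm_nonneg _) hM₁0) (Ne.symm hC)
      refine ⟨ε / (‖B‖ * M₁), div_pos hε hCpos, fun w hw => ?_⟩
      rw [Real.dist_eq]
      calc |N w - N v| ≤ ‖B‖ * M₁ * ‖w - v‖ := hNlip w v
        _ < ‖B‖ * M₁ * (ε / (‖B‖ * M₁)) := by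
            refine mul_lt_mul_of_pos_left ?_ hCpos
            rwa [dist_eq_norm] at hw
        _ = ε := by rw [mul_div_cancel₀ _ hCpos.ne']
  -- homogeneity
  have hNhom : ∀ (r : ℝ) (v : E), 0 ≤ r → N (r • v) = r * N v := by
    intro r v hr
    simp only [hN]
    simp only [_root_.map_smul, norm_smul, Real.norm_of_nonneg hr]
    exact intervalIntegral.integral_const_mul r _
  -- compactness
  by_cases htriv : ∀ v : E, v = 0
  · refine ⟨1, one_pos, fun v => ?_⟩
    rw [htriv v]
    simp [hN]
  · push_neg at htriv
    obtain ⟨v₁, hv₁⟩ := htriv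
    have : Nontrivial E := ⟨v₁, 0, hv₁⟩
    have hsph : (Metric.sphere (0:E) 1).Nonempty :=
      NormedSpace.sphere_nonempty.mpr zero_le_one
    obtain ⟨v₀, hv₀mem, hmin⟩ :=
      (isCompact_sphere (0:E) 1).exists_isMinOn hsph hNcont.continuousOn
    have hv₀norm : ‖v₀‖ = 1 := by simpa using hv₀mem
    have hv₀ne : v₀ ≠ 0 := by
      intro hcon; rw [hcon] at hv₀norm; simp at hv₀norm
    refine ⟨N v₀, hNpos v₀ hv₀ne, fun v => ?_⟩
    by_cases hv : v = 0
    · simp [hv, hN]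
    · have hvn : 0 < ‖v‖ := norm_pos_iff.mpr hv
      set u : E := ‖v‖⁻¹ • v with hu
      have hunorm : u ∈ Metric.sphere (0:E) 1 := by
        simp [hu, norm_smul, abs_of_pos (inv_pos.mpr hvn), inv_mul_cancel₀ hvn.ne']
      have h1 : N v₀ ≤ N u := (isMinOn_iff.mp hmin) u hunorm
      have hvu : (‖v‖ : ℝ) • u = v := by
        rw [hu, smul_smul, mul_inv_cancel₀ hvn.ne', one_smul]
      have h2 : N v = ‖v‖ * N u := by
        calc N v = N (‖v‖ • u) := by rw [hvu]
          _ = ‖v‖ * N u := hNhom _ _ (norm_nonneg v)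
      calc N v₀ * ‖v‖ ≤ N u * ‖v‖ := mul_le_mul_of_nonneg_right h1 (norm_nonneg v)
        _ = N v := by rw [h2]; ring


/-- If the pair `(α, β)` is observable, there is a constant `K > 0`,
depending only on `α` and `β` (in particular not on the length `T` of the interval),
such that any solution `z` of `z' = α z + f` on an interval of integer length `T ≥ 1`
satisfies `∫ ‖z‖ ≤ K (∫ ‖β z‖ + ∫ ‖f‖)`. -/
theorem observability_a_priori_estimate {n m : ℕ}
    (α : Matrix (Fin n) (Fin n) ℝ) (β : Matrix (Fin m) (Fin n) ℝ)
    (hobs : ∀ v : EuclideanSpace ℝ (Fin n),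
      (∀ k < n, Matrix.toEuclideanLin β (Matrix.toEuclideanLin (α ^ k) v) = 0) → v = 0) :
    ∃ K > (0 : ℝ), ∀ (a : ℝ) (T : ℕ), 1 ≤ T →
      ∀ f z : ℝ → EuclideanSpace ℝ (Fin n),
        IntegrableOn f (Set.Icc a (a + (T : ℝ))) →
        (∀ t ∈ Set.Icc a (a + (T : ℝ)),
          HasDerivAt z (Matrix.toEuclideanLin α (z t) + f t) t) →
        ∫ t in a..(a + (T : ℝ)), ‖z t‖ ≤
          K * ((∫ t in a..(a + (T : ℝ)), ‖Matrix.toEuclideanLin β (z t)‖) +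
               ∫ t in a..(a + (T : ℝ)), ‖f t‖) := by
  classical
  set A : EuclideanSpace ℝ (Fin n) →L[ℝ] EuclideanSpace ℝ (Fin n) :=
    LinearMap.toContinuousLinearMap (Matrix.toEuclideanLin α) with hAdef
  set B : EuclideanSpace ℝ (Fin n) →L[ℝ] EuclideanSpace ℝ (Fin m) :=
    LinearMap.toContinuousLinearMap (Matrix.toEuclideanLin β) with hBdef
  have hpow : ∀ (k : ℕ) (v : EuclideanSpace ℝ (Fin n)),
      (A ^ k) v = Matrix.toEuclideanLin (α ^ k) v := by
    intro k
    induction k with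
    | zero =>
      intro v
      simp [Matrix.toEuclideanLin_eq_toLin, Matrix.toLin_one]
    | succ k ih =>
      intro v
      rw [pow_succ', ContinuousLinearMap.mul_apply, ih]
      rw [hAdef, LinearMap.coe_toContinuousLinearMap']
      conv_rhs => rw [pow_succ']
      simp only [Matrix.toEuclideanLin_eq_toLin]
      exact (Matrix.toLin_mul_apply _ _ _ α (α ^ k) v).symm
  have hobs' : ∀ v : EuclideanSpace ℝ (Fin n), (∀ k : ℕ, B ((A ^ k) v) = 0) → v = 0 := by
    intro v hv
    refine hobs v (fun k _ => ?_)
    have h1 := hv k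
    rw [hpow k v, hBdef, LinearMap.coe_toContinuousLinearMap'] at h1
    exact h1
  obtain ⟨M₀, hM₀⟩ := (isCompact_Icc (a := (-1:ℝ)) (b := 1)).exists_bound_of_continuousOn
    (eA_cont A).continuousOn
  set M := max M₀ 1 with hMdef
  have hM1 : (1:ℝ) ≤ M := le_max_right _ _
  have hM0 : (0:ℝ) < M := lt_of_lt_of_le one_pos hM1
  have hM : ∀ s ∈ Icc (-1:ℝ) 1, ‖eA A s‖ ≤ M := fun s hs => (hM₀ s hs).trans (le_max_left _ _)
  obtain ⟨c₀, hc₀, hcoer⟩ := obs_coercive A B hobs'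
  have hdiv : 0 < M / c₀ := div_pos hM0 hc₀
  set D : ℝ := M / c₀ * (‖B‖ * (M * M)) + M * M with hDdef
  have hDnn : 0 ≤ D := by
    rw [hDdef]
    have h1 : 0 ≤ M / c₀ * (‖B‖ * (M * M)) :=
      mul_nonneg hdiv.le (mul_nonneg (norm_nonneg _) (mul_nonneg hM0.le hM0.le))
    have h2 : 0 ≤ M * M := mul_nonneg hM0.le hM0.le
    linarith
  set K : ℝ := M / c₀ + D + 1 with hKdef
  have hKpos : 0 < K := by rw [hKdef]; linarith
  refine ⟨K, hKpos, ?_⟩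
  intro a T hT f z hf hz
  have hz' : ∀ t ∈ Icc a (a + (T:ℝ)), HasDerivAt z (A (z t) + f t) t := fun t ht => hz t ht
  have haT : a ≤ a + (T:ℝ) := by
    have : (0:ℝ) ≤ (T:ℝ) := Nat.cast_nonneg T
    linarith
  have hzc : ContinuousOn z (Icc a (a + (T:ℝ))) := fun t ht =>
    ((hz' t ht).continuousAt).continuousWithinAt
  have hmem : ∀ i : ℕ, i < T → a ≤ a + (i:ℝ) ∧ a + (i:ℝ) + 1 ≤ a + (T:ℝ) := by
    intro i hi
    have h0 : (0:ℝ) ≤ (i:ℝ) := Nat.cast_nonneg i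
    have h1 : ((i:ℝ) + 1) ≤ (T:ℝ) := by exact_mod_cast Nat.succ_le_of_lt hi
    exact ⟨by linarith, by linarith⟩
  have hcast : ∀ i : ℕ, a + ((i+1 : ℕ) : ℝ) = a + (i:ℝ) + 1 := by
    intro i; push_cast; ring
  have hsubI : ∀ i : ℕ, i < T → Icc (a + (i:ℝ)) (a + (i:ℝ) + 1) ⊆ Icc a (a + (T:ℝ)) :=
    fun i hi => Icc_subset_Icc (hmem i hi).1 (hmem i hi).2
  have huI : ∀ i : ℕ, uIcc (a + (i:ℝ)) (a + ((i+1:ℕ)):ℝ) = Icc (a + (i:ℝ)) (a + (i:ℝ) + 1) := by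
    intro i; rw [hcast i, uIcc_of_le (by linarith)]
  have hIz : ∀ i : ℕ, i < T → IntervalIntegrable (fun t => ‖z t‖) volume
      (a + (i:ℝ)) (a + ((i+1:ℕ):ℝ)) := by
    intro i hi
    refine ContinuousOn.intervalIntegrable ?_
    rw [huI i]
    exact (hzc.mono (hsubI i hi)).norm
  have hIBz : ∀ i : ℕ, i < T → IntervalIntegrable (fun t => ‖B (z t)‖) volume
      (a + (i:ℝ)) (a + ((i+1:ℕ):ℝ)) := by
    intro i hi
    refine ContinuousOn.intervalIntegrable ?_
    rw [huI i]
    exact (B.continuous.comp_continuousOn (hzc.mono (hsubI i hi))).norm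
  have hIf : ∀ i : ℕ, i < T → IntervalIntegrable (fun t => ‖f t‖) volume
      (a + (i:ℝ)) (a + ((i+1:ℕ):ℝ)) := by
    intro i hi
    refine IntervalIntegrable.norm ?_
    refine IntegrableOn.intervalIntegrable ?_
    refine hf.mono_set ?_
    rw [huI i]
    exact hsubI i hi
  have Sz := intervalIntegral.sum_integral_adjacent_intervals (μ := volume)
    (a := fun i : ℕ => a + (i:ℝ)) (n := T) hIz
  have SBz := intervalIntegral.sum_integral_adjacent_intervals (μ := volume)
    (a := fun i : ℕ => a + (i:ℝ)) (n := T) hIBz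
  have Sf := intervalIntegral.sum_integral_adjacent_intervals (μ := volume)
    (a := fun i : ℕ => a + (i:ℝ)) (n := T) hIf
  simp only [Nat.cast_zero, add_zero] at Sz SBz Sf
  have hGnn : (0:ℝ) ≤ ∫ t in a..(a + (T:ℝ)), ‖B (z t)‖ :=
    intervalIntegral.integral_nonneg haT (fun t _ => norm_nonneg _)
  have hFnn : (0:ℝ) ≤ ∫ t in a..(a + (T:ℝ)), ‖f t‖ :=
    intervalIntegral.integral_nonneg haT (fun t _ => norm_nonneg _)
  show ∫ t in a..(a + (T : ℝ)), ‖z t‖ ≤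
      K * ((∫ t in a..(a + (T : ℝ)), ‖B (z t)‖) + ∫ t in a..(a + (T : ℝ)), ‖f t‖)
  calc ∫ t in a..(a + (T:ℝ)), ‖z t‖
      = ∑ i ∈ Finset.range T, ∫ t in (a + (i:ℝ))..(a + ((i+1:ℕ):ℝ)), ‖z t‖ := Sz.symm
    _ ≤ ∑ i ∈ Finset.range T,
        ((M / c₀) * (∫ t in (a + (i:ℝ))..(a + ((i+1:ℕ):ℝ)), ‖B (z t)‖)
          + D * (∫ t in (a + (i:ℝ))..(a + ((i+1:ℕ):ℝ)), ‖f t‖)) := by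
        refine Finset.sum_le_sum ?_
        intro i hi
        have hi' := Finset.mem_range.mp hi
        rw [hcast i]
        have est := unit_interval_estimate A B M c₀ hM1 hM hc₀ hcoer a (a + (T:ℝ)) f z hf hz'
          (a + (i:ℝ)) (hmem i hi').1 (hmem i hi').2
        refine est.trans (le_of_eq ?_)
        rw [hDdef]; ring
    _ = (M / c₀) * (∑ i ∈ Finset.range T, ∫ t in (a + (i:ℝ))..(a + ((i+1:ℕ):ℝ)), ‖B (z t)‖)
        + D * (∑ i ∈ Finset.range T, ∫ t in (a + (i:ℝ))..(a + ((i+1:ℕ):ℝ)), ‖f t‖) := by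
        rw [Finset.sum_add_distrib, ← Finset.mul_sum, ← Finset.mul_sum]
    _ = (M / c₀) * (∫ t in a..(a + (T:ℝ)), ‖B (z t)‖)
        + D * (∫ t in a..(a + (T:ℝ)), ‖f t‖) := by rw [SBz, Sf]
    _ ≤ K * ((∫ t in a..(a + (T:ℝ)), ‖B (z t)‖) + ∫ t in a..(a + (T:ℝ)), ‖f t‖) := by
        have h1 : M / c₀ ≤ K := by rw [hKdef]; linarith
        have h2 : D ≤ K := by rw [hKdef]; linarith
        nlinarith
end

section
/- Let ω_1, …, ω_N be positive reals with pairwise distinct squares ω_i². Let A be the 2N×2N block-diagonal matrix with 2×2 blocks [[0,1],[−ω_i²,0]] and let B ∈ ℝ^{2N} have entries B_{2i−1}=0, B_{2i}=1 (i=1,…,N). Let C be the 1×2N row vector C = (c_1, 0, c_2, 0, …, c_N, 0) with c_k = (−1)^{N+1} ω_k^{2N} Π_{i≠k} (ω_i² − ω_k²)^{−1}. Then the matrix A + BC is nilpotent: (A + BC)^{2N} = 0. -/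
open Matrix

/-- The `2N × 2N` block-diagonal system matrix of `N` oscillators, with `2×2` blocks
`[[0,1],[-ω_i², 0]]` (0-based indexing: row `2i` is the `x_i`-row, row `2i+1` the `y_i`-row). -/
noncomputable def oscA (N : ℕ) (ω : Fin N → ℝ) : Matrix (Fin (2 * N)) (Fin (2 * N)) ℝ :=
  Matrix.of fun i j =>
    if i.val % 2 = 0 ∧ j.val = i.val + 1 then 1
    else if i.val % 2 = 1 ∧ i.val = j.val + 1 then
      -(ω ⟨i.val / 2, by have := i.isLt; omega⟩) ^ 2
    else 0

/-- The control vector `B ∈ ℝ^{2N}` with `B_{2i-1} = 0`, `B_{2i} = 1` (1-based). -/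
def oscB (N : ℕ) : Fin (2 * N) → ℝ := fun i => if i.val % 2 = 1 then 1 else 0

/-- The coefficient `c_k = (-1)^{N+1} ω_k^{2N} Π_{i≠k} (ω_i² - ω_k²)⁻¹`. -/
noncomputable def oscc (N : ℕ) (ω : Fin N → ℝ) (k : Fin N) : ℝ :=
  (-1) ^ (N + 1) * ω k ^ (2 * N) * ∏ i ∈ Finset.univ.erase k, ((ω i) ^ 2 - (ω k) ^ 2)⁻¹

/-- The row vector `C = (c_1, 0, c_2, 0, …, c_N, 0)`. -/
noncomputable def oscC (N : ℕ) (ω : Fin N → ℝ) : Fin (2 * N) → ℝ := fun i =>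
  if i.val % 2 = 0 then oscc N ω ⟨i.val / 2, by have := i.isLt; omega⟩ else 0

open Polynomial Finset

lemma lagrange_key {N : ℕ} (hN : 0 < N) (a : Fin N → ℝ) (ha : Function.Injective a) :
    ∏ i, (X + C (a i)) =
      (∑ k, C ((-1) ^ (N + 1) * a k ^ N * ∏ i ∈ univ.erase k, (a i - a k)⁻¹) *
        ∏ i ∈ univ.erase k, (X + C (a i))) + X ^ N := by
  set c : Fin N → ℝ := fun k => (-1) ^ (N + 1) * a k ^ N * ∏ i ∈ univ.erase k, (a i - a k)⁻¹
    with hc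
  set P : ℝ[X] := (∏ i, (X + C (a i)) - X ^ N) -
      ∑ k, C (c k) * ∏ i ∈ univ.erase k, (X + C (a i)) with hP
  have hprodmonic : (∏ i : Fin N, (X + C (a i))).Monic :=
    monic_prod_of_monic _ _ (fun i _ => monic_X_add_C (a i))
  have hproddeg : (∏ i : Fin N, (X + C (a i))).natDegree = N := by
    rw [natDegree_prod _ _ (fun i _ => (monic_X_add_C (a i)).ne_zero)]
    simp [natDegree_X_add_C]
  -- degree bound for the first part
  have hdeg1 : (∏ i : Fin N, (X + C (a i)) - X ^ N).natDegree ≤ N - 1 := by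
    by_cases h0 : (∏ i : Fin N, (X + C (a i)) - X ^ N) = 0
    · simp [h0]
    · have hdegeq : (∏ i : Fin N, (X + C (a i))).degree = (X ^ N : ℝ[X]).degree := by
        rw [degree_X_pow, degree_eq_natDegree hprodmonic.ne_zero, hproddeg]
      have hlt : (∏ i : Fin N, (X + C (a i)) - X ^ N).degree <
          (∏ i : Fin N, (X + C (a i))).degree := by
        apply degree_sub_lt hdegeq hprodmonic.ne_zero
        simp [hprodmonic.leadingCoeff, (monic_X_pow N).leadingCoeff]
      rw [degree_eq_natDegree hprodmonic.ne_zero, hproddeg] at hlt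
      have := (natDegree_lt_iff_degree_lt h0).2 hlt
      omega
  -- degree bound for the sum part
  have hdeg2 : (∑ k, C (c k) * ∏ i ∈ univ.erase k, (X + C (a i))).natDegree ≤ N - 1 := by
    apply natDegree_sum_le_of_forall_le
    intro k _
    calc (C (c k) * ∏ i ∈ univ.erase k, (X + C (a i))).natDegree
        ≤ (C (c k)).natDegree + (∏ i ∈ univ.erase k, (X + C (a i))).natDegree :=
          natDegree_mul_le
      _ ≤ 0 + ∑ i ∈ univ.erase k, (X + C (a i)).natDegree := by
          gcongr
          · exact le_of_eq (natDegree_C _)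
          · exact natDegree_prod_le _ _
      _ ≤ N - 1 := by
          simp only [natDegree_X_add_C, zero_add, Finset.sum_const, smul_eq_mul, mul_one]
          rw [Finset.card_erase_of_mem (Finset.mem_univ k)]
          simp
  have hPdeg : P.natDegree < N := by
    have := natDegree_sub_le (∏ i : Fin N, (X + C (a i)) - X ^ N)
      (∑ k, C (c k) * ∏ i ∈ univ.erase k, (X + C (a i)))
    rw [← hP] at this
    omega
  have hP0 : P = 0 := by
    apply eq_zero_of_natDegree_lt_card_of_eval_eq_zero P (f := fun k => -a k)
    · intro i j h
      exact ha (neg_injective h)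
    · intro k
      have h1 : (∏ i : Fin N, (X + C (a i))).eval (-a k) = 0 := by
        rw [eval_prod]
        exact Finset.prod_eq_zero (Finset.mem_univ k) (by simp)
      have h2 : (∑ j, C (c j) * ∏ i ∈ univ.erase j, (X + C (a i))).eval (-a k)
          = (-1) ^ (N + 1) * a k ^ N := by
        rw [eval_finset_sum]
        rw [Finset.sum_eq_single k]
        · rw [eval_mul, eval_C, eval_prod]
          simp only [eval_add, eval_X, eval_C]
          have hne : ∀ i ∈ univ.erase k, a i - a k ≠ 0 := by
            intro i hi
            have : i ≠ k := (Finset.mem_erase.1 hi).1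
            exact sub_ne_zero.2 (fun h => this (ha h))
          have : (∏ i ∈ univ.erase k, (a i - a k)⁻¹) * ∏ i ∈ univ.erase k, (-a k + a i) = 1 := by
            rw [← Finset.prod_mul_distrib]
            apply Finset.prod_eq_one
            intro i hi
            rw [show -a k + a i = a i - a k by ring]
            exact inv_mul_cancel₀ (hne i hi)
          rw [hc]
          calc (-1) ^ (N + 1) * a k ^ N * (∏ i ∈ univ.erase k, (a i - a k)⁻¹) *
                ∏ i ∈ univ.erase k, (-a k + a i)
              = (-1) ^ (N + 1) * a k ^ N * ((∏ i ∈ univ.erase k, (a i - a k)⁻¹) *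
                ∏ i ∈ univ.erase k, (-a k + a i)) := by ring
            _ = (-1) ^ (N + 1) * a k ^ N := by rw [this, mul_one]
        · intro j _ hj
          rw [eval_mul, eval_prod]
          have hk : k ∈ univ.erase j := Finset.mem_erase.2 ⟨Ne.symm hj, Finset.mem_univ k⟩
          rw [Finset.prod_eq_zero hk (by simp)]
          ring
        · simp
      rw [hP]
      simp only [eval_sub, eval_pow, eval_X, h2, h1]
      rw [zero_sub]
      have : (-a k) ^ N = (-1) ^ N * a k ^ N := by rw [neg_pow]
      rw [this, pow_succ]
      ring
    · simpa using hPdeg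
  rw [hP] at hP0
  linear_combination hP0

/-- interleaving equivalence -/

def oscEquiv (N : ℕ) : Fin 2 × Fin N ≃ Fin (2 * N) where
  toFun p := ⟨2 * p.2.val + p.1.val, by have := p.1.isLt; have := p.2.isLt; omega⟩
  invFun i := (⟨i.val % 2, by omega⟩, ⟨i.val / 2, by have := i.isLt; omega⟩)
  left_inv := by
    rintro ⟨b, k⟩
    have hb := b.isLt
    refine Prod.ext (Fin.ext ?_) (Fin.ext ?_) <;> simp <;> omega
  right_inv := by
    intro i
    apply Fin.ext
    simp
    omega

set_option maxHeartbeats 1600000 in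
/-- For pairwise distinct squares of the frequencies, the matrix `A + BC`
is nilpotent: `(A + BC)^{2N} = 0`. -/
theorem oscA_add_BC_nilpotent (N : ℕ) (hN : 0 < N) (ω : Fin N → ℝ)
    (hpos : ∀ i, 0 < ω i) (hdist : ∀ i j : Fin N, i ≠ j → ω i ^ 2 ≠ ω j ^ 2) :
    (oscA N ω + vecMulVec (oscB N) (oscC N ω)) ^ (2 * N) = 0 := by
  classical
  set M : Matrix (Fin (2 * N)) (Fin (2 * N)) ℝ := oscA N ω + vecMulVec (oscB N) (oscC N ω)
    with hM
  set K := FractionRing (Polynomial ℝ) with hK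
  set φ : Polynomial ℝ →+* K := algebraMap (Polynomial ℝ) K with hφdef
  have hφ : Function.Injective φ := IsFractionRing.injective _ _
  set rr : ℝ →+* K := φ.comp (Polynomial.C : ℝ →+* Polynomial ℝ) with hrr
  set t : K := φ X with ht
  set a : Fin N → ℝ := fun k => ω k ^ 2 with ha
  have hainj : Function.Injective a := by
    intro i j h
    by_contra hij
    exact hdist i j hij h
  set d : Fin N → K := fun k => t ^ 2 + rr (a k) with hd
  have hdne : ∀ k, d k ≠ 0 := by
    intro k h
    have h2 : (X ^ 2 + C (a k) : Polynomial ℝ) ≠ 0 := by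
      intro hc
      have := congrArg (fun p => Polynomial.coeff p 2) hc
      simp [coeff_X_pow, Polynomial.coeff_C] at this
    apply h2
    apply hφ
    have h' : φ X ^ 2 + φ (C (a k)) = 0 := h
    simpa [map_add, map_pow] using h'
  set e := oscEquiv N with he
  set Dk : Fin N → Matrix (Fin 2) (Fin 2) K := fun k => !![t, -1; rr (a k), t] with hDk
  set Ek : Fin N → Matrix (Fin 2) (Fin 2) K :=
    fun k => (d k)⁻¹ • !![t, 1; -(rr (a k)), t] with hEk
  have hDkEk : ∀ k, Dk k * Ek k = 1 := by
    intro k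
    have hdk := hdne k
    have hdk' : (d k)⁻¹ * (t ^ 2 + rr (a k)) = 1 := inv_mul_cancel₀ hdk
    ext i j
    fin_cases i <;> fin_cases j <;>
      simp [hDk, hEk, Matrix.mul_apply, Fin.sum_univ_two, Matrix.one_apply] <;>
      [linear_combination hdk'; ring; ring; linear_combination hdk']
  set D : Matrix (Fin (2 * N)) (Fin (2 * N)) K :=
    (blockDiagonal Dk).submatrix e.symm e.symm with hD
  set E : Matrix (Fin (2 * N)) (Fin (2 * N)) K :=
    (blockDiagonal Ek).submatrix e.symm e.symm with hE
  have hDE : D * E = 1 := by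
    rw [hD, hE, submatrix_mul_equiv (blockDiagonal Dk) (blockDiagonal Ek) _ e.symm _,
      ← blockDiagonal_mul]
    have : (fun k => Dk k * Ek k) = fun _ => 1 := funext hDkEk
    rw [this, show (fun _ : Fin N => (1 : Matrix (Fin 2) (Fin 2) K)) = 1 from rfl,
      blockDiagonal_one, submatrix_one_equiv]
  have hdetD : D.det = ∏ k, d k := by
    rw [hD, det_submatrix_equiv_self, det_blockDiagonal]
    congr 1
    funext k
    rw [hDk]
    rw [det_fin_two_of]
    ring
  set u : Fin (2 * N) → K := fun i => -(rr (oscB N i)) with hu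
  set v : Fin (2 * N) → K := fun j => rr (oscC N ω j) with hv
  have hval : ∀ (b : Fin 2) (k : Fin N), (e (b, k)).val = 2 * k.val + b.val :=
    fun _ _ => rfl
  have hfin : ∀ (k : Fin N) (m : ℕ) (hm : m = 2 * k.val ∨ m = 2 * k.val + 1) (h : m / 2 < N),
      (⟨m / 2, h⟩ : Fin N) = k := by
    intro k m hm h
    apply Fin.ext
    simp only
    omega
  -- values of oscB, oscC at encoded indices
  have hB0 : ∀ k : Fin N, oscB N (e ((0 : Fin 2), k)) = 0 := by
    intro k
    simp only [oscB, hval]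
    rw [if_neg (by omega)]
  have hB1 : ∀ k : Fin N, oscB N (e ((1 : Fin 2), k)) = 1 := by
    intro k
    simp only [oscB, hval]
    rw [if_pos (by omega)]
  have hC0 : ∀ k : Fin N, oscC N ω (e ((0 : Fin 2), k)) = oscc N ω k := by
    intro k
    simp only [oscC, hval]
    rw [if_pos (by omega)]
    congr 1
    apply hfin
    left
    omega
  have hC1 : ∀ k : Fin N, oscC N ω (e ((1 : Fin 2), k)) = 0 := by
    intro k
    simp only [oscC, hval]
    rw [if_neg (by omega)]
  -- oscA at encoded indices
  have hA00 : ∀ k k' : Fin N, oscA N ω (e ((0 : Fin 2), k)) (e ((0 : Fin 2), k')) = 0 := by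
    intro k k'
    simp only [oscA, Matrix.of_apply, hval]
    rw [if_neg (by omega), if_neg (by omega)]
  have hA01 : ∀ k k' : Fin N,
      oscA N ω (e ((0 : Fin 2), k)) (e ((1 : Fin 2), k')) = if k = k' then 1 else 0 := by
    intro k k'
    by_cases hkk : k = k'
    · subst hkk
      simp only [oscA, Matrix.of_apply, hval]
      rw [if_pos ⟨by omega, by omega⟩]
      simp
    · simp only [oscA, Matrix.of_apply, hval]
      rw [if_neg (fun hcon => hkk (Fin.ext (by omega))),
        if_neg (by omega), if_neg hkk]
  have hA10 : ∀ k k' : Fin N,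
      oscA N ω (e ((1 : Fin 2), k)) (e ((0 : Fin 2), k')) =
        if k = k' then -(a k) else 0 := by
    intro k k'
    by_cases hkk : k = k'
    · subst hkk
      simp only [oscA, Matrix.of_apply, hval]
      rw [if_neg (by omega), if_pos ⟨by omega, by omega⟩,
        hfin k _ (by right; omega)]
      simp [ha]
    · simp only [oscA, Matrix.of_apply, hval]
      rw [if_neg (by omega),
        if_neg (fun hcon => hkk (Fin.ext (by omega))), if_neg hkk]
  have hA11 : ∀ k k' : Fin N, oscA N ω (e ((1 : Fin 2), k)) (e ((1 : Fin 2), k')) = 0 := by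
    intro k k'
    simp only [oscA, Matrix.of_apply, hval]
    rw [if_neg (by omega), if_neg (by omega)]
  have hediag : ∀ (b b' : Fin 2) (k k' : Fin N),
      (e (b, k) = e (b', k')) ↔ (b = b' ∧ k = k') := by
    intro b b' k k'
    rw [e.injective.eq_iff, Prod.mk.injEq]
  -- the key entrywise identity
  have hkey : (charmatrix M).map φ = D + vecMulVec u v := by
    have key : ∀ (b b' : Fin 2) (k k' : Fin N),
        φ (charmatrix M (e (b, k)) (e (b', k'))) =
          blockDiagonal Dk (b, k) (b', k') + u (e (b, k)) * v (e (b', k')) := by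
      intro b b' k k'
      rw [charmatrix_apply]
      rw [blockDiagonal_apply]
      have hMval : M (e (b, k)) (e (b', k')) =
          oscA N ω (e (b, k)) (e (b', k')) + oscB N (e (b, k)) * oscC N ω (e (b', k')) := by
        rw [hM, Matrix.add_apply, vecMulVec_apply]
      fin_cases b <;> fin_cases b' <;>
        simp only [Fin.zero_eta, Fin.mk_one, id_eq, Fin.isValue] at hMval ⊢
      · -- b = 0, b' = 0
        rw [hMval, hA00]
        simp only [hu, hv, hB0, hB1, hC0, hC1]
        by_cases hkk : k = k'
        · subst hkk
          rw [Matrix.diagonal_apply_eq]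
          simp [hDk, ht]
        · rw [Matrix.diagonal_apply_ne _ (by rw [Ne, hediag]; tauto)]
          simp [hkk]
      · -- b = 0, b' = 1
        rw [hMval, hA01]
        simp only [hu, hv, hB0, hB1, hC0, hC1]
        rw [Matrix.diagonal_apply_ne _ (by rw [Ne, hediag]; tauto)]
        by_cases hkk : k = k'
        · subst hkk
          simp [hDk]
        · simp [hkk]
      · -- b = 1, b' = 0
        rw [hMval, hA10]
        simp only [hu, hv, hB0, hB1, hC0, hC1]
        rw [Matrix.diagonal_apply_ne _ (by rw [Ne, hediag]; tauto)]
        by_cases hkk : k = k'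
        · subst hkk
          simp only [if_pos rfl]
          simp [hDk, hrr, map_add, map_neg, _root_.map_mul, _root_.map_one]
          try ring
        · simp only [if_neg hkk]
          simp [hDk, hkk, hrr]
          try ring
      · -- b = 1, b' = 1
        rw [hMval, hA11]
        simp only [hu, hv, hB0, hB1, hC0, hC1]
        by_cases hkk : k = k'
        · subst hkk
          rw [Matrix.diagonal_apply_eq]
          simp [hDk, ht]
        · rw [Matrix.diagonal_apply_ne _ (by rw [Ne, hediag]; tauto)]
          simp [hkk]
    ext i j
    obtain ⟨⟨b, k⟩, rfl⟩ : ∃ p : Fin 2 × Fin N, e p = i := ⟨e.symm i, e.apply_symm_apply i⟩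
    obtain ⟨⟨b', k'⟩, rfl⟩ : ∃ p : Fin 2 × Fin N, e p = j := ⟨e.symm j, e.apply_symm_apply j⟩
    rw [Matrix.map_apply, Matrix.add_apply, vecMulVec_apply, hD, Matrix.submatrix_apply,
      Equiv.symm_apply_apply, Equiv.symm_apply_apply]
    exact key b b' k k'
  -- determinant computation
  have hunit : IsUnit D.det := isUnit_det_of_right_inverse hDE
  have hDinv : D⁻¹ = E := inv_eq_right_inv hDE
  have hrowcol : (1 + replicateRow (Fin 1) v * E * replicateCol (Fin 1) u) =
      Matrix.of (fun _ _ : Fin 1 => 1 - ∑ k, rr (oscc N ω k) * (d k)⁻¹) := by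
    ext x y
    have hx : x = 0 := Subsingleton.elim _ _
    have hy : y = 0 := Subsingleton.elim _ _
    subst hx; subst hy
    rw [Matrix.add_apply, Matrix.one_apply_eq, Matrix.of_apply]
    have hentry : (replicateRow (Fin 1) v * E * replicateCol (Fin 1) u) 0 0 =
        ∑ j, (∑ i, v i * E i j) * u j := by
      simp [Matrix.mul_apply, Matrix.replicateRow_apply, Matrix.replicateCol_apply]
    rw [hentry]
    have hsum : ∑ j, (∑ i, v i * E i j) * u j =
        ∑ q : Fin 2 × Fin N, (∑ p : Fin 2 × Fin N, v (e p) * E (e p) (e q)) * u (e q) := by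
      rw [← Equiv.sum_comp e (fun j => (∑ i, v i * E i j) * u j)]
      refine Finset.sum_congr rfl fun q _ => ?_
      rw [← Equiv.sum_comp e (fun i => v i * E i (e q))]
    rw [hsum]
    have hEpq : ∀ p q : Fin 2 × Fin N, E (e p) (e q) = blockDiagonal Ek p q := by
      intro p q
      rw [hE, Matrix.submatrix_apply, Equiv.symm_apply_apply, Equiv.symm_apply_apply]
    have hv0 : ∀ k, v (e ((0 : Fin 2), k)) = rr (oscc N ω k) := by
      intro k; simp only [hv, hC0]
    have hv1 : ∀ k, v (e ((1 : Fin 2), k)) = 0 := by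
      intro k; simp only [hv, hC1, map_zero]
    have hu0 : ∀ k, u (e ((0 : Fin 2), k)) = 0 := by
      intro k; simp only [hu, hB0, map_zero, neg_zero]
    have hu1 : ∀ k, u (e ((1 : Fin 2), k)) = -1 := by
      intro k; simp only [hu, hB1, _root_.map_one]
    have hEk01 : ∀ k, Ek k 0 1 = (d k)⁻¹ := by
      intro k
      simp [hEk]
    simp only [hEpq, Fintype.sum_prod_type, Fin.sum_univ_two, hv0, hv1, hu0, hu1,
      blockDiagonal_apply, zero_mul, mul_zero, Finset.sum_const_zero, add_zero, zero_add,
      mul_ite, Finset.sum_ite_eq', Finset.mem_univ, if_true, mul_neg, mul_one, hEk01]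
    simp only [mul_neg_one, Finset.sum_neg_distrib]
    ring
  -- assemble the determinant
  have hφchar : φ M.charpoly = t ^ (2 * N) := by
    have h1 : φ M.charpoly = ((charmatrix M).map φ).det := by
      rw [show M.charpoly = (charmatrix M).det from rfl, RingHom.map_det,
        RingHom.mapMatrix_apply]
    rw [h1, hkey, vecMulVec_eq (Fin 1) u v, det_add_replicateCol_mul_replicateRow hunit, hDinv]
    show D.det * (1 + replicateRow (Fin 1) v * E * replicateCol (Fin 1) u).det = t ^ (2 * N)
    rw [hrowcol, hdetD, det_fin_one, Matrix.of_apply]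
    -- Lagrange identity transported to K
    have hlag := lagrange_key hN a hainj
    have hlagK := congrArg (Polynomial.eval₂RingHom rr (t ^ 2)) hlag
    simp only [map_prod, map_sum, _root_.map_mul, map_add, _root_.map_pow,
      Polynomial.coe_eval₂RingHom, Polynomial.eval₂_X, Polynomial.eval₂_C] at hlagK
    have hoscc : ∀ k : Fin N, rr (-1 : ℝ) ^ (N + 1) * rr (a k) ^ N *
        ∏ i ∈ univ.erase k, rr ((a i - a k)⁻¹) = rr (oscc N ω k) := by
      intro k
      rw [← _root_.map_pow, ← _root_.map_pow, ← map_prod, ← _root_.map_mul, ← _root_.map_mul]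
      congr 1
      rw [oscc]
      simp only [ha]
      rw [← pow_mul]
    simp only [hoscc, ← hd] at hlagK
    rw [← pow_mul] at hlagK
    rw [mul_sub, mul_one, Finset.mul_sum]
    have hrearr : ∀ k ∈ (univ : Finset (Fin N)),
        (∏ i, d i) * (rr (oscc N ω k) * (d k)⁻¹) =
          rr (oscc N ω k) * ∏ i ∈ univ.erase k, d i := by
      intro k _
      rw [← Finset.mul_prod_erase univ d (Finset.mem_univ k)]
      have := hdne k
      linear_combination (rr (oscc N ω k) * ∏ i ∈ univ.erase k, d i) * (mul_inv_cancel₀ this)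
    rw [Finset.sum_congr rfl hrearr]
    linear_combination hlagK
  have hchar : M.charpoly = X ^ (2 * N) := by
    apply hφ
    rw [hφchar, _root_.map_pow]
  have hCH := Matrix.aeval_self_charpoly M
  rw [hchar] at hCH
  simpa using hCH
end

section
/- Let ω_1, …, ω_N be positive reals with pairwise distinct squares ω_i², let A, B, C, 𝔢_i be as in the canonical-form construction, and let D be the 2N×2N matrix whose i-th column is 𝔢_i (i = 1,…,2N). Then D is invertible and D⁻¹ (A + BC) D = 𝔄 and D⁻¹ B = 𝔅, where 𝔄 is the 2N×2N matrix with entries 𝔄_{i+1,i} = −i for i = 1,…,2N−1 and all other entries zero, and 𝔅 = (1,0,…,0)* ∈ ℝ^{2N}. -/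
open Matrix

/-- The vectors `𝔢_i = ((-1)^{i-1}/(i-1)!) (A+BC)^{i-1} B`, `i = 1, …, 2N`
(here indexed by `k : Fin (2N)` with `k = i - 1`). -/
noncomputable def oscE (N : ℕ) (ω : Fin N → ℝ) (k : Fin (2 * N)) : Fin (2 * N) → ℝ :=
  ((-1 : ℝ) ^ (k : ℕ) / (Nat.factorial (k : ℕ) : ℝ)) •
    ((oscA N ω + vecMulVec (oscB N) (oscC N ω)) ^ (k : ℕ)).mulVec (oscB N)

/-- The canonical matrix `𝔄` with subdiagonal entries `𝔄_{i+1,i} = -i` (1-based),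
i.e. (0-based) entry `-(j+1)` at position `(j+1, j)`, and zeros elsewhere. -/
def frakA (N : ℕ) : Matrix (Fin (2 * N)) (Fin (2 * N)) ℝ :=
  Matrix.of fun i j => if i.val = j.val + 1 then -((j.val : ℝ) + 1) else 0

/-- The canonical vector `𝔅 = (1, 0, …, 0)*`. -/
def frakB (N : ℕ) : Fin (2 * N) → ℝ := fun i => if i.val = 0 then 1 else 0

open Polynomial Finset Matrix

lemma coeff_basis_eq_nodalWeight {F : Type*} [Field F] {ι : Type*} [DecidableEq ι]
    (s : Finset ι) (v : ι → F) (i : ι) (hi : i ∈ s) :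
    (Lagrange.basis s v i).coeff (#s - 1) = Lagrange.nodalWeight s v i := by
  rw [Lagrange.basis, Lagrange.nodalWeight]
  have : ∀ j ∈ s.erase i, Lagrange.basisDivisor (v i) (v j)
      = C ((v i - v j)⁻¹) * (X - C (v j)) := fun j _ => rfl
  rw [Finset.prod_congr rfl this, Finset.prod_mul_distrib, ← map_prod,
    ← Lagrange.nodal_eq, coeff_C_mul]
  have hm : (Lagrange.nodal (s.erase i) v).Monic := Lagrange.nodal_monic
  have hd : (Lagrange.nodal (s.erase i) v).natDegree = #s - 1 := by
    rw [Lagrange.natDegree_nodal, Finset.card_erase_of_mem hi]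
  rw [← hd, hm.coeff_natDegree, mul_one]

lemma coeff_card_sub_one_eq_sum {F : Type*} [Field F] {ι : Type*} [Fintype ι] [DecidableEq ι]
    [Nonempty ι] (v : ι → F) (hv : Function.Injective v) (p : F[X])
    (hp : p.degree < Fintype.card ι) :
    p.coeff (Fintype.card ι - 1) =
      ∑ i, eval (v i) p * Lagrange.nodalWeight Finset.univ v i := by
  have h := Lagrange.eq_interpolate (s := (univ : Finset ι)) (v := v) (f := p)
    (hv.injOn) (by simpa using hp)
  conv_lhs => rw [h]
  rw [Lagrange.interpolate_apply, finset_sum_coeff]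
  refine Finset.sum_congr rfl fun i _ => ?_
  rw [coeff_C_mul, ← Finset.card_univ, coeff_basis_eq_nodalWeight _ _ _ (mem_univ i)]

/-- elementary symmetric function of the `ω j ^ 2`. -/
noncomputable def osce (N : ℕ) (ω : Fin N → ℝ) (r : ℕ) : ℝ :=
  ∑ S ∈ Finset.univ.powersetCard r, ∏ j ∈ S, (ω j) ^ 2

noncomputable def oscf (N : ℕ) (ω : Fin N → ℝ) (m : ℕ) (x : ℝ) : ℝ :=
  ∑ r ∈ Finset.range (m + 1), osce N ω r * (-x) ^ (m - r)

lemma osce_zero (N : ℕ) (ω : Fin N → ℝ) : osce N ω 0 = 1 := by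
  simp [osce]

lemma oscf_zero (N : ℕ) (ω : Fin N → ℝ) (x : ℝ) : oscf N ω 0 x = 1 := by
  simp [oscf, osce_zero]

lemma oscf_succ (N : ℕ) (ω : Fin N → ℝ) (m : ℕ) (x : ℝ) :
    oscf N ω (m + 1) x = -x * oscf N ω m x + osce N ω (m + 1) := by
  rw [oscf, Finset.sum_range_succ, Nat.sub_self, pow_zero, mul_one, oscf, Finset.mul_sum]
  congr 1
  refine Finset.sum_congr rfl fun r hr => ?_
  rw [Finset.mem_range] at hr
  have : m + 1 - r = (m - r) + 1 := by omega
  rw [this, pow_succ]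
  ring

lemma oscf_N (N : ℕ) (ω : Fin N → ℝ) (x : ℝ) :
    oscf N ω N x = ∏ j, ((ω j) ^ 2 - x) := by
  have h : ∀ j ∈ (univ : Finset (Fin N)), (ω j) ^ 2 - x = (ω j) ^ 2 + (-x) := by intros; ring
  rw [Finset.prod_congr rfl h, Finset.prod_add, Finset.sum_powerset]
  rw [oscf]
  simp only [Finset.card_univ, Fintype.card_fin]
  refine Finset.sum_congr rfl fun r hr => ?_
  rw [osce, Finset.sum_mul]
  refine Finset.sum_congr rfl fun S hS => ?_
  rw [Finset.mem_powersetCard] at hS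
  rw [Finset.prod_const, Finset.card_sdiff_of_subset hS.1, hS.2, Finset.card_univ, Fintype.card_fin]

lemma oscf_N_root (N : ℕ) (ω : Fin N → ℝ) (j : Fin N) :
    oscf N ω N ((ω j) ^ 2) = 0 := by
  rw [oscf_N]
  exact Finset.prod_eq_zero (Finset.mem_univ j) (sub_self _)

lemma osc_star (N : ℕ) (hN : 0 < N) (ω : Fin N → ℝ)
    (hdist : ∀ i j : Fin N, i ≠ j → ω i ^ 2 ≠ ω j ^ 2) (m : ℕ) (hm : m < N) :
    ∑ j, oscc N ω j * oscf N ω m ((ω j) ^ 2) = osce N ω (m + 1) := by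
  have hNe : Nonempty (Fin N) := ⟨⟨0, hN⟩⟩
  set t : Fin N → ℝ := fun j => ω j ^ 2 with ht
  have hv : Function.Injective t := by
    intro i j hij
    by_contra h
    exact hdist i j h hij
  set p : ℝ[X] := ∑ r ∈ Finset.Icc (m + 1) N,
      C ((-1 : ℝ) ^ (m + 1 + r) * osce N ω r) * X ^ (N + m - r) with hp
  have hdeg : p.degree < (Fintype.card (Fin N) : ℕ) := by
    rw [Fintype.card_fin]
    refine lt_of_le_of_lt (Polynomial.degree_sum_le _ _) ?_
    rw [Finset.sup_lt_iff (by exact_mod_cast WithBot.bot_lt_coe N)]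
    intro r hr
    rw [Finset.mem_Icc] at hr
    refine lt_of_le_of_lt (Polynomial.degree_C_mul_X_pow_le _ _) ?_
    exact_mod_cast (by omega : N + m - r < N)
  have hcoeff : p.coeff (N - 1) = osce N ω (m + 1) := by
    rw [hp, Polynomial.finset_sum_coeff]
    rw [Finset.sum_eq_single (m + 1)]
    · rw [Polynomial.coeff_C_mul, Polynomial.coeff_X_pow, if_pos (by omega)]
      have : (-1 : ℝ) ^ (m + 1 + (m + 1)) = 1 := Even.neg_one_pow ⟨m + 1, by ring⟩
      rw [this]; ring
    · intro r hr hne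
      rw [Finset.mem_Icc] at hr
      rw [Polynomial.coeff_C_mul, Polynomial.coeff_X_pow, if_neg (by omega), mul_zero]
    · intro h
      exact absurd (Finset.mem_Icc.mpr ⟨le_refl _, by omega⟩) h
  have hid : ∀ x : ℝ, eval x p
      = x ^ N * oscf N ω m x - (-1) ^ (m + N) * x ^ m * oscf N ω N x := by
    intro x
    have e1 : eval x p
        = ∑ r ∈ Finset.Icc (m + 1) N, (-1 : ℝ) ^ (m + 1 + r) * osce N ω r * x ^ (N + m - r) := by
      rw [hp, Polynomial.eval_finset_sum]
      refine Finset.sum_congr rfl fun r _ => ?_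
      simp
    have e2 : x ^ N * oscf N ω m x
        = ∑ r ∈ Finset.range (m + 1), (-1 : ℝ) ^ (m + r) * osce N ω r * x ^ (N + m - r) := by
      rw [oscf, Finset.mul_sum]
      refine Finset.sum_congr rfl fun r hr => ?_
      rw [Finset.mem_range] at hr
      have h1 : (-x) ^ (m - r) = (-1 : ℝ) ^ (m - r) * x ^ (m - r) := by rw [neg_pow]
      have h3 : (-1 : ℝ) ^ (m + r) = (-1) ^ (m - r) := by
        have : m + r = (m - r) + 2 * r := by omega
        rw [this, pow_add, pow_mul]; norm_num
      have h2 : x ^ N * x ^ (m - r) = x ^ (N + m - r) := by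
        rw [← pow_add]; congr 1; omega
      rw [h1, h3]
      calc x ^ N * (osce N ω r * ((-1 : ℝ) ^ (m - r) * x ^ (m - r)))
          = (-1 : ℝ) ^ (m - r) * osce N ω r * (x ^ N * x ^ (m - r)) := by ring
        _ = (-1 : ℝ) ^ (m - r) * osce N ω r * x ^ (N + m - r) := by rw [h2]
    have e3 : (-1 : ℝ) ^ (m + N) * x ^ m * oscf N ω N x
        = ∑ r ∈ Finset.range (N + 1), (-1 : ℝ) ^ (m + r) * osce N ω r * x ^ (N + m - r) := by
      rw [oscf, Finset.mul_sum]
      refine Finset.sum_congr rfl fun r hr => ?_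
      rw [Finset.mem_range] at hr
      have h1 : (-x) ^ (N - r) = (-1 : ℝ) ^ (N - r) * x ^ (N - r) := by rw [neg_pow]
      have h3 : (-1 : ℝ) ^ (m + N) * (-1) ^ (N - r) = (-1) ^ (m + r) := by
        rw [← pow_add]
        have : m + N + (N - r) = (m + r) + 2 * (N - r) := by omega
        rw [this, pow_add, pow_mul]; norm_num
      have h2 : x ^ m * x ^ (N - r) = x ^ (N + m - r) := by
        rw [← pow_add]; congr 1; omega
      rw [h1]
      calc (-1 : ℝ) ^ (m + N) * x ^ m * (osce N ω r * ((-1 : ℝ) ^ (N - r) * x ^ (N - r)))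
          = ((-1 : ℝ) ^ (m + N) * (-1) ^ (N - r)) * osce N ω r * (x ^ m * x ^ (N - r)) := by ring
        _ = (-1 : ℝ) ^ (m + r) * osce N ω r * x ^ (N + m - r) := by rw [h2, h3]
    rw [e1, e2, e3]
    have hsplit : ∑ r ∈ Finset.range (N + 1),
          (-1 : ℝ) ^ (m + r) * osce N ω r * x ^ (N + m - r)
        = (∑ r ∈ Finset.range (m + 1), (-1 : ℝ) ^ (m + r) * osce N ω r * x ^ (N + m - r))
          + ∑ r ∈ Finset.Icc (m + 1) N, (-1 : ℝ) ^ (m + r) * osce N ω r * x ^ (N + m - r) := by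
      rw [Finset.range_eq_Ico, Finset.range_eq_Ico, ← Finset.Ico_add_one_right_eq_Icc]
      exact (Finset.sum_Ico_consecutive (fun r => (-1 : ℝ) ^ (m + r) * osce N ω r * x ^ (N + m - r)) (m := 0) (n := m + 1) (k := N + 1) (by omega) (by omega)).symm
    rw [hsplit]
    have hA : ∀ r ∈ Finset.Icc (m + 1) N,
        (-1 : ℝ) ^ (m + 1 + r) * osce N ω r * x ^ (N + m - r)
        = -((-1 : ℝ) ^ (m + r) * osce N ω r * x ^ (N + m - r)) := by
      intro r _
      have : m + 1 + r = (m + r) + 1 := by ring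
      rw [this, pow_succ]; ring
    rw [Finset.sum_congr rfl hA, Finset.sum_neg_distrib]
    ring
  have hw : ∀ j, oscc N ω j = (t j) ^ N * Lagrange.nodalWeight Finset.univ t j := by
    intro j
    rw [oscc, Lagrange.nodalWeight]
    have h1 : ∀ i ∈ Finset.univ.erase j, ((ω i) ^ 2 - (ω j) ^ 2)⁻¹ = -((t j - t i)⁻¹) := by
      intro i _
      rw [← inv_neg]
      congr 1
      show ω i ^ 2 - ω j ^ 2 = -(ω j ^ 2 - ω i ^ 2)
      ring
    have hneg : ∏ i ∈ Finset.univ.erase j, -((t j - t i)⁻¹)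
        = (-1 : ℝ) ^ (Finset.univ.erase j).card * ∏ i ∈ Finset.univ.erase j, (t j - t i)⁻¹ := by
      rw [← Finset.prod_const, ← Finset.prod_mul_distrib]
      exact Finset.prod_congr rfl fun i _ => by ring
    rw [Finset.prod_congr rfl h1, hneg]
    have hcard : (Finset.univ.erase j).card = N - 1 := by
      rw [Finset.card_erase_of_mem (Finset.mem_univ j), Finset.card_univ, Fintype.card_fin]
    rw [hcard]
    have hsign : (-1 : ℝ) ^ (N + 1) * (-1) ^ (N - 1) = 1 := by
      rw [← pow_add]
      exact Even.neg_one_pow ⟨N, by omega⟩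
    have hpow : ω j ^ (2 * N) = (t j) ^ N := by
      show ω j ^ (2 * N) = (ω j ^ 2) ^ N
      rw [← pow_mul]
    calc (-1 : ℝ) ^ (N + 1) * ω j ^ (2 * N)
          * ((-1) ^ (N - 1) * ∏ i ∈ Finset.univ.erase j, (t j - t i)⁻¹)
        = ((-1 : ℝ) ^ (N + 1) * (-1) ^ (N - 1)) * (ω j ^ (2 * N)
          * ∏ i ∈ Finset.univ.erase j, (t j - t i)⁻¹) := by ring
      _ = (t j) ^ N * ∏ i ∈ Finset.univ.erase j, (t j - t i)⁻¹ := by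
          rw [hsign, hpow]; ring
  calc ∑ j, oscc N ω j * oscf N ω m ((ω j) ^ 2)
      = ∑ j, eval (t j) p * Lagrange.nodalWeight Finset.univ t j := by
        refine Finset.sum_congr rfl fun j _ => ?_
        rw [hw j, hid (t j)]
        have : oscf N ω N (t j) = 0 := oscf_N_root N ω j
        rw [this]
        ring
    _ = p.coeff (Fintype.card (Fin N) - 1) := (coeff_card_sub_one_eq_sum t hv p hdeg).symm
    _ = osce N ω (m + 1) := by rw [Fintype.card_fin]; exact hcoeff

/-! ### Matrix layer -/

lemma sum_range_two_mul' (n : ℕ) (H : ℕ → ℝ) :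
    ∑ i ∈ Finset.range (2 * n), H i = ∑ j ∈ Finset.range n, (H (2 * j) + H (2 * j + 1)) := by
  induction n with
  | zero => simp
  | succ n ih =>
    have h : 2 * (n + 1) = (2 * n + 1) + 1 := by ring
    rw [h, Finset.sum_range_succ, Finset.sum_range_succ, ih, Finset.sum_range_succ, add_assoc]

def fe (N : ℕ) (j : Fin N) : Fin (2 * N) := ⟨2 * j.val, by have := j.isLt; omega⟩
def fo (N : ℕ) (j : Fin N) : Fin (2 * N) := ⟨2 * j.val + 1, by have := j.isLt; omega⟩

lemma sum_fin_two_mul (N : ℕ) (h : Fin (2 * N) → ℝ) :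
    ∑ i, h i = ∑ j, (h (fe N j) + h (fo N j)) := by
  set H : ℕ → ℝ := fun k => if hk : k < 2 * N then h ⟨k, hk⟩ else 0 with hH
  have h1 : ∑ i, h i = ∑ i ∈ Finset.range (2 * N), H i := by
    rw [← Fin.sum_univ_eq_sum_range H (2 * N)]
    exact Finset.sum_congr rfl fun i _ => by rw [hH]; simp [i.isLt]
  have h2 : ∑ j, (h (fe N j) + h (fo N j))
      = ∑ j ∈ Finset.range N, (H (2 * j) + H (2 * j + 1)) := by
    rw [← Fin.sum_univ_eq_sum_range (fun k => H (2 * k) + H (2 * k + 1)) N]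
    refine Finset.sum_congr rfl fun j _ => ?_
    have e1 : 2 * j.val < 2 * N := by have := j.isLt; omega
    have e2 : 2 * j.val + 1 < 2 * N := by have := j.isLt; omega
    rw [hH]
    simp only [dif_pos e1, dif_pos e2]
    rfl
  rw [h1, h2, sum_range_two_mul']

lemma fin_even_or_odd {N : ℕ} (i : Fin (2 * N)) :
    (∃ j : Fin N, i = fe N j) ∨ (∃ j : Fin N, i = fo N j) := by
  have hi := i.isLt
  rcases Nat.even_or_odd i.val with ⟨j, hj⟩ | ⟨j, hj⟩
  · exact Or.inl ⟨⟨j, by omega⟩, Fin.ext (by show i.val = 2 * j; omega)⟩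
  · exact Or.inr ⟨⟨j, by omega⟩, Fin.ext (by show i.val = 2 * j + 1; omega)⟩

section matrixpart
variable (N : ℕ) (ω : Fin N → ℝ)

lemma mulVec_M_even (w : Fin (2 * N) → ℝ) (j : Fin N) :
    (oscA N ω + vecMulVec (oscB N) (oscC N ω)).mulVec w (fe N j) = w (fo N j) := by
  have hB : oscB N (fe N j) = 0 := by
    simp only [oscB, fe, Fin.val_mk]
    exact if_neg (by omega)
  simp only [Matrix.mulVec, dotProduct, Matrix.add_apply, Matrix.vecMulVec_apply, hB,
    zero_mul, add_zero]
  rw [Finset.sum_eq_single (fo N j)]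
  · simp only [oscA, Matrix.of_apply, fe, fo, Fin.val_mk]
    rw [if_pos ⟨by omega, trivial⟩, one_mul]
  · intro b _ hb
    have hbv : b.val ≠ 2 * j.val + 1 := fun h => hb (Fin.ext h)
    simp only [oscA, Matrix.of_apply, fe, Fin.val_mk]
    rw [if_neg (by omega), if_neg (by omega), zero_mul]
  · intro h; exact absurd (Finset.mem_univ _) h

lemma mulVec_M_odd (w : Fin (2 * N) → ℝ) (j : Fin N) :
    (oscA N ω + vecMulVec (oscB N) (oscC N ω)).mulVec w (fo N j)
      = -(ω j) ^ 2 * w (fe N j) + ∑ j', oscc N ω j' * w (fe N j') := by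
  have hB : oscB N (fo N j) = 1 := by
    simp only [oscB, fo, Fin.val_mk]
    exact if_pos (by omega)
  simp only [Matrix.mulVec, dotProduct, Matrix.add_apply, Matrix.vecMulVec_apply, hB,
    one_mul, add_mul]
  rw [Finset.sum_add_distrib]
  congr 1
  · rw [Finset.sum_eq_single (fe N j)]
    · simp only [oscA, Matrix.of_apply, fe, fo, Fin.val_mk]
      rw [if_neg (by omega), if_pos ⟨by omega, trivial⟩]
      have hj : ∀ (h : (2 * j.val + 1) / 2 < N), (⟨(2 * j.val + 1) / 2, h⟩ : Fin N) = j :=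
        fun h => Fin.ext (by simp only [Fin.val_mk]; omega)
      rw [hj]
    · intro b _ hb
      have hbv : b.val ≠ 2 * j.val := fun h => hb (Fin.ext h)
      simp only [oscA, Matrix.of_apply, fo, Fin.val_mk]
      rw [if_neg (by omega), if_neg (by omega), zero_mul]
    · intro h; exact absurd (Finset.mem_univ _) h
  · rw [sum_fin_two_mul N (fun s => oscC N ω s * w s)]
    refine Finset.sum_congr rfl fun j' _ => ?_
    have hj : ∀ (h : 2 * j'.val / 2 < N), (⟨2 * j'.val / 2, h⟩ : Fin N) = j' :=
      fun h => Fin.ext (by simp only [Fin.val_mk]; omega)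
    have h1 : oscC N ω (fe N j') = oscc N ω j' := by
      simp only [oscC, fe, Fin.val_mk]
      refine (if_pos (by omega)).trans ?_
      rw [hj]
    have h2 : oscC N ω (fo N j') = 0 := by
      simp only [oscC, fo, Fin.val_mk]
      exact if_neg (by omega)
    rw [h1, h2, zero_mul, add_zero]

noncomputable def oscv (N : ℕ) (ω : Fin N → ℝ) (k : ℕ) : Fin (2 * N) → ℝ := fun i =>
  if i.val % 2 = (k + 1) % 2 then
    oscf N ω (k / 2) ((ω ⟨i.val / 2, by have := i.isLt; omega⟩) ^ 2)
  else 0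

lemma oscv_even_fe (m : ℕ) (j : Fin N) : oscv N ω (2 * m) (fe N j) = 0 := by
  simp only [oscv, fe, Fin.val_mk]
  exact if_neg (by omega)

lemma oscv_even_fo (m : ℕ) (j : Fin N) :
    oscv N ω (2 * m) (fo N j) = oscf N ω m ((ω j) ^ 2) := by
  simp only [oscv, fo, Fin.val_mk]
  refine (if_pos (by omega)).trans ?_
  have hj : ∀ (h : (2 * j.val + 1) / 2 < N), (⟨(2 * j.val + 1) / 2, h⟩ : Fin N) = j :=
    fun h => Fin.ext (by simp only [Fin.val_mk]; omega)
  rw [hj]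
  congr 1
  omega

lemma oscv_odd_fe (m : ℕ) (j : Fin N) :
    oscv N ω (2 * m + 1) (fe N j) = oscf N ω m ((ω j) ^ 2) := by
  simp only [oscv, fe, Fin.val_mk]
  refine (if_pos (by omega)).trans ?_
  have hj : ∀ (h : 2 * j.val / 2 < N), (⟨2 * j.val / 2, h⟩ : Fin N) = j :=
    fun h => Fin.ext (by simp only [Fin.val_mk]; omega)
  rw [hj]
  congr 1
  omega

lemma oscv_odd_fo (m : ℕ) (j : Fin N) : oscv N ω (2 * m + 1) (fo N j) = 0 := by
  simp only [oscv, fo, Fin.val_mk]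
  exact if_neg (by omega)

lemma oscv_zero : oscv N ω 0 = oscB N := by
  funext i
  simp only [oscv, oscB]
  by_cases h : i.val % 2 = 1
  · rw [if_pos (by omega), if_pos h, oscf_zero]
  · rw [if_neg (by omega), if_neg h]

lemma oscv_2N : oscv N ω (2 * N) = 0 := by
  funext i
  rcases fin_even_or_odd i with ⟨j, rfl⟩ | ⟨j, rfl⟩
  · rw [oscv_even_fe]; rfl
  · rw [oscv_even_fo]
    have : (2 * N) / 2 = N := by omega
    show oscf N ω N ((ω j) ^ 2) = 0
    exact oscf_N_root N ω j

lemma osc_step (hN : 0 < N) (hdist : ∀ i j : Fin N, i ≠ j → ω i ^ 2 ≠ ω j ^ 2)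
    (k : ℕ) (hk : k < 2 * N) :
    (oscA N ω + vecMulVec (oscB N) (oscC N ω)).mulVec (oscv N ω k) = oscv N ω (k + 1) := by
  funext i
  rcases fin_even_or_odd i with ⟨j, rfl⟩ | ⟨j, rfl⟩
  · rw [mulVec_M_even]
    rcases Nat.even_or_odd k with ⟨m, hm⟩ | ⟨m, hm⟩
    · have hm' : k = 2 * m := by omega
      subst hm'
      rw [oscv_even_fo]
      have h1 : 2 * m + 1 = 2 * m + 1 := rfl
      rw [oscv_odd_fe]
    · have hm' : k = 2 * m + 1 := by omega
      subst hm'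
      rw [oscv_odd_fo]
      have h2 : 2 * m + 1 + 1 = 2 * (m + 1) := by ring
      rw [h2, oscv_even_fe]
  · rw [mulVec_M_odd]
    rcases Nat.even_or_odd k with ⟨m, hm⟩ | ⟨m, hm⟩
    · have hm' : k = 2 * m := by omega
      subst hm'
      rw [oscv_odd_fo]
      have h0 : ∀ j' : Fin N, oscc N ω j' * oscv N ω (2 * m) (fe N j') = 0 := by
        intro j'
        rw [oscv_even_fe, mul_zero]
      rw [oscv_even_fe, Finset.sum_congr rfl fun j' _ => h0 j', Finset.sum_const_zero]
      ring
    · have hm' : k = 2 * m + 1 := by omega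
      subst hm'
      have h2 : 2 * m + 1 + 1 = 2 * (m + 1) := by ring
      rw [h2, oscv_even_fo, oscv_odd_fe]
      have hsum : ∑ j', oscc N ω j' * oscv N ω (2 * m + 1) (fe N j')
          = osce N ω (m + 1) := by
        rw [Finset.sum_congr rfl fun j' _ => by rw [oscv_odd_fe]]
        exact osc_star N hN ω hdist m (by omega)
      rw [hsum, oscf_succ]

lemma osc_pow (hN : 0 < N) (hdist : ∀ i j : Fin N, i ≠ j → ω i ^ 2 ≠ ω j ^ 2)
    (k : ℕ) (hk : k ≤ 2 * N) :
    ((oscA N ω + vecMulVec (oscB N) (oscC N ω)) ^ k).mulVec (oscB N) = oscv N ω k := by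
  induction k with
  | zero => rw [pow_zero, Matrix.one_mulVec, oscv_zero]
  | succ k ih =>
    rw [pow_succ', ← Matrix.mulVec_mulVec, ih (by omega), osc_step N ω hN hdist k (by omega)]

lemma oscf_reflect (m : ℕ) (x : ℝ) :
    oscf N ω m x = ∑ r ∈ Finset.range (m + 1), (-x) ^ r * osce N ω (m - r) := by
  rw [oscf]
  conv_rhs => rw [← Finset.sum_range_reflect]
  refine Finset.sum_congr rfl fun r hr => ?_
  rw [Finset.mem_range] at hr
  have h1 : m + 1 - 1 - r = m - r := by omega
  have h2 : m - (m - r) = r := by omega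
  rw [h1, h2]
  ring

lemma F_det_ne_zero (hdist : ∀ i j : Fin N, i ≠ j → ω i ^ 2 ≠ ω j ^ 2) :
    (Matrix.of fun (j m : Fin N) => oscf N ω m.val ((ω j) ^ 2)).det ≠ 0 := by
  set U : Matrix (Fin N) (Fin N) ℝ :=
    Matrix.of fun r m => if r.val ≤ m.val then osce N ω (m.val - r.val) else 0 with hU
  set V : Matrix (Fin N) (Fin N) ℝ := Matrix.vandermonde (fun j => -((ω j) ^ 2)) with hV
  have hFVU : (Matrix.of fun (j m : Fin N) => oscf N ω m.val ((ω j) ^ 2)) = V * U := by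
    ext j m
    rw [Matrix.mul_apply, Matrix.of_apply, oscf_reflect]
    have hs : ∀ r : Fin N, V j r * U r m
        = (fun r' : ℕ => (-((ω j) ^ 2)) ^ r' * (if r' ≤ m.val then osce N ω (m.val - r') else 0))
          r.val := by
      intro r
      rw [hV, hU]
      rfl
    rw [Finset.sum_congr rfl fun r _ => hs r,
      Fin.sum_univ_eq_sum_range
        (fun r' => (-((ω j) ^ 2)) ^ r' * (if r' ≤ m.val then osce N ω (m.val - r') else 0)) N]
    rw [← Finset.sum_subset (Finset.range_subset_range.mpr (by have := m.isLt; omega :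
        m.val + 1 ≤ N))]
    · refine Finset.sum_congr rfl fun r hr => ?_
      rw [Finset.mem_range] at hr
      rw [if_pos (by omega)]
    · intro r _ hr
      rw [Finset.mem_range] at hr
      rw [if_neg (by omega), mul_zero]
  have hdetU : U.det = 1 := by
    have ht : U.BlockTriangular id := by
      intro r m hrm
      rw [hU, Matrix.of_apply, if_neg (by exact fun h => absurd hrm (by simp; omega))]
    rw [Matrix.det_of_upperTriangular ht]
    refine Finset.prod_eq_one fun m _ => ?_
    rw [hU, Matrix.of_apply, if_pos le_rfl, Nat.sub_self, osce_zero]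
  have hdetV : V.det ≠ 0 := by
    rw [hV, Matrix.det_vandermonde]
    refine Finset.prod_ne_zero_iff.mpr fun i _ => Finset.prod_ne_zero_iff.mpr fun j hj => ?_
    rw [Finset.mem_Ioi] at hj
    refine sub_ne_zero.mpr fun h => ?_
    have : ω j ^ 2 = ω i ^ 2 := by linarith [neg_injective h]
    exact hdist j i (Fin.ne_of_gt hj) this
  rw [hFVU, Matrix.det_mul, hdetU, mul_one]
  exact hdetV

end matrixpart

/-- The matrix `D` whose `i`-th column is `𝔢_i` is invertible and
conjugates `A + BC` into the canonical form: `D⁻¹ (A + BC) D = 𝔄` and `D⁻¹ B = 𝔅`. -/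
theorem osc_canonical_form (N : ℕ) (hN : 0 < N) (ω : Fin N → ℝ)
    (hpos : ∀ i, 0 < ω i) (hdist : ∀ i j : Fin N, i ≠ j → ω i ^ 2 ≠ ω j ^ 2)
    (D : Matrix (Fin (2 * N)) (Fin (2 * N)) ℝ)
    (hD : D = Matrix.of fun r k => oscE N ω k r) :
    IsUnit D ∧
    D⁻¹ * (oscA N ω + vecMulVec (oscB N) (oscC N ω)) * D = frakA N ∧
    D⁻¹.mulVec (oscB N) = frakB N := by
  set M : Matrix (Fin (2 * N)) (Fin (2 * N)) ℝ :=
    oscA N ω + vecMulVec (oscB N) (oscC N ω) with hM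
  have hDentry : ∀ (r k : Fin (2 * N)),
      D r k = ((-1 : ℝ) ^ (k : ℕ) / ((k : ℕ).factorial : ℝ)) * oscv N ω k.val r := by
    intro r k
    rw [hD]
    show oscE N ω k r = _
    rw [oscE, ← hM, osc_pow N ω hN hdist k.val (le_of_lt k.isLt)]
    rfl
  have hMD : M * D = D * frakA N := by
    ext r k
    rw [Matrix.mul_apply, Matrix.mul_apply]
    have hL : ∑ s, M r s * D s k
        = ((-1 : ℝ) ^ (k : ℕ) / ((k : ℕ).factorial : ℝ)) * oscv N ω (k.val + 1) r := by
      have h1 : ∀ s, M r s * D s k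
          = ((-1 : ℝ) ^ (k : ℕ) / ((k : ℕ).factorial : ℝ)) * (M r s * oscv N ω k.val s) := by
        intro s; rw [hDentry s k]; ring
      rw [Finset.sum_congr rfl fun s _ => h1 s, ← Finset.mul_sum]
      congr 1
      have h2 := osc_step N ω hN hdist k.val k.isLt
      calc ∑ s, M r s * oscv N ω k.val s = M.mulVec (oscv N ω k.val) r := rfl
        _ = oscv N ω (k.val + 1) r := by rw [h2]
    rw [hL]
    by_cases hk2 : k.val + 1 < 2 * N
    · rw [Finset.sum_eq_single (⟨k.val + 1, hk2⟩ : Fin (2 * N))]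
      · rw [hDentry r ⟨k.val + 1, hk2⟩]
        simp only [frakA, Matrix.of_apply, Fin.val_mk, if_pos rfl, ↓reduceIte]
        have hfac : (((k.val + 1).factorial : ℕ) : ℝ)
            = ((k.val : ℝ) + 1) * ((k.val.factorial : ℕ) : ℝ) := by
          rw [Nat.factorial_succ]; push_cast; ring
        have hne : ((k.val.factorial : ℕ) : ℝ) ≠ 0 :=
          Nat.cast_ne_zero.mpr (Nat.factorial_ne_zero _)
        have hne1 : ((k.val : ℝ) + 1) ≠ 0 := by positivity
        rw [pow_succ, hfac]
        field_simp
      · intro b _ hb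
        have hbv : b.val ≠ k.val + 1 := fun h => hb (Fin.ext h)
        simp only [frakA, Matrix.of_apply]
        rw [if_neg hbv, mul_zero]
      · intro h; exact absurd (Finset.mem_univ _) h
    · have hk3 : k.val + 1 = 2 * N := by have := k.isLt; omega
      have hz : oscv N ω (k.val + 1) r = 0 := by rw [hk3, oscv_2N]; rfl
      rw [hz, mul_zero]
      symm
      refine Finset.sum_eq_zero fun b _ => ?_
      simp only [frakA, Matrix.of_apply]
      rw [if_neg (by have := b.isLt; omega), mul_zero]
  have hscal : ∀ n : ℕ, ((-1 : ℝ) ^ n / ((n.factorial : ℕ) : ℝ)) ≠ 0 := by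
    intro n
    apply div_ne_zero
    · exact pow_ne_zero _ (by norm_num)
    · exact Nat.cast_ne_zero.mpr (Nat.factorial_ne_zero _)
  have hdet : D.det ≠ 0 := by
    intro hdet0
    obtain ⟨a, ha0, haD⟩ := (Matrix.exists_mulVec_eq_zero_iff).mpr hdet0
    apply ha0
    have hsplit : ∀ i, ∑ k, D i k * a k = 0 := fun i => congrFun haD i
    set F : Matrix (Fin N) (Fin N) ℝ :=
      Matrix.of fun (j m : Fin N) => oscf N ω m.val ((ω j) ^ 2) with hF
    have hFdet := F_det_ne_zero N ω hdist
    have heven : ∀ q : Fin N, a (fe N q) = 0 := by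
      set b : Fin N → ℝ := fun q =>
        ((-1 : ℝ) ^ (2 * q.val) / (((2 * q.val).factorial : ℕ) : ℝ)) * a (fe N q) with hb
      have hFb : F.mulVec b = 0 := by
        funext j
        have h0 := hsplit (fo N j)
        rw [sum_fin_two_mul N (fun k => D (fo N j) k * a k)] at h0
        have h1 : ∀ q : Fin N, D (fo N j) (fe N q) * a (fe N q) + D (fo N j) (fo N q) * a (fo N q)
            = F j q * b q := by
          intro q
          have e1 : D (fo N j) (fe N q)
              = ((-1 : ℝ) ^ (2 * q.val) / (((2 * q.val).factorial : ℕ) : ℝ))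
                * oscf N ω q.val ((ω j) ^ 2) := by
            rw [hDentry]
            show ((-1 : ℝ) ^ (2 * q.val) / (((2 * q.val).factorial : ℕ) : ℝ))
                * oscv N ω (2 * q.val) (fo N j) = _
            rw [oscv_even_fo]
          have e2 : D (fo N j) (fo N q) = 0 := by
            rw [hDentry]
            show ((-1 : ℝ) ^ (2 * q.val + 1) / (((2 * q.val + 1).factorial : ℕ) : ℝ))
                * oscv N ω (2 * q.val + 1) (fo N j) = 0
            rw [oscv_odd_fo, mul_zero]
          rw [e1, e2, zero_mul, add_zero, hb, hF]
          show _ = oscf N ω q.val ((ω j) ^ 2) * _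
          ring
        rw [Finset.sum_congr rfl fun q _ => h1 q] at h0
        exact h0
      have hb0 : b = 0 := by
        by_contra hbne
        exact hFdet ((Matrix.exists_mulVec_eq_zero_iff).mp ⟨b, hbne, hFb⟩)
      intro q
      have := congrFun hb0 q
      rw [hb] at this
      have h2 := hscal (2 * q.val)
      exact (mul_eq_zero.mp this).resolve_left h2
    have hodd : ∀ q : Fin N, a (fo N q) = 0 := by
      set b : Fin N → ℝ := fun q =>
        ((-1 : ℝ) ^ (2 * q.val + 1) / (((2 * q.val + 1).factorial : ℕ) : ℝ)) * a (fo N q) with hb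
      have hFb : F.mulVec b = 0 := by
        funext j
        have h0 := hsplit (fe N j)
        rw [sum_fin_two_mul N (fun k => D (fe N j) k * a k)] at h0
        have h1 : ∀ q : Fin N, D (fe N j) (fe N q) * a (fe N q) + D (fe N j) (fo N q) * a (fo N q)
            = F j q * b q := by
          intro q
          have e1 : D (fe N j) (fe N q) = 0 := by
            rw [hDentry]
            show ((-1 : ℝ) ^ (2 * q.val) / (((2 * q.val).factorial : ℕ) : ℝ))
                * oscv N ω (2 * q.val) (fe N j) = 0
            rw [oscv_even_fe, mul_zero]
          have e2 : D (fe N j) (fo N q)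
              = ((-1 : ℝ) ^ (2 * q.val + 1) / (((2 * q.val + 1).factorial : ℕ) : ℝ))
                * oscf N ω q.val ((ω j) ^ 2) := by
            rw [hDentry]
            show ((-1 : ℝ) ^ (2 * q.val + 1) / (((2 * q.val + 1).factorial : ℕ) : ℝ))
                * oscv N ω (2 * q.val + 1) (fe N j) = _
            rw [oscv_odd_fe]
          rw [e1, e2, zero_mul, zero_add, hb, hF]
          show _ = oscf N ω q.val ((ω j) ^ 2) * _
          ring
        rw [Finset.sum_congr rfl fun q _ => h1 q] at h0
        exact h0
      have hb0 : b = 0 := by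
        by_contra hbne
        exact hFdet ((Matrix.exists_mulVec_eq_zero_iff).mp ⟨b, hbne, hFb⟩)
      intro q
      have := congrFun hb0 q
      rw [hb] at this
      have h2 := hscal (2 * q.val + 1)
      exact (mul_eq_zero.mp this).resolve_left h2
    funext i
    rcases fin_even_or_odd i with ⟨j, rfl⟩ | ⟨j, rfl⟩
    · exact heven j
    · exact hodd j
  have hUnit : IsUnit D := (Matrix.isUnit_iff_isUnit_det D).mpr (isUnit_iff_ne_zero.mpr hdet)
  have hinv : D⁻¹ * D = 1 :=
    Matrix.nonsing_inv_mul D ((Matrix.isUnit_iff_isUnit_det D).mp hUnit)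
  refine ⟨hUnit, ?_, ?_⟩
  · calc D⁻¹ * M * D = D⁻¹ * (M * D) := by rw [mul_assoc]
      _ = D⁻¹ * (D * frakA N) := by rw [hMD]
      _ = (D⁻¹ * D) * frakA N := by rw [mul_assoc]
      _ = frakA N := by rw [hinv, one_mul]
  · have hDB : D.mulVec (frakB N) = oscB N := by
      funext r
      show ∑ k, D r k * frakB N k = oscB N r
      rw [Finset.sum_eq_single (⟨0, by omega⟩ : Fin (2 * N))]
      · rw [hDentry]
        show ((-1 : ℝ) ^ (0 : ℕ) / (((Nat.factorial 0 : ℕ)) : ℝ)) * oscv N ω 0 r * frakB N ⟨0, _⟩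
            = oscB N r
        rw [oscv_zero]
        have : frakB N ⟨0, by omega⟩ = 1 := by rw [frakB]; rfl
        rw [this]
        norm_num
      · intro b _ hb
        have hbv : b.val ≠ 0 := fun h => hb (Fin.ext h)
        have : frakB N b = 0 := by rw [frakB]; exact if_neg hbv
        rw [this, mul_zero]
      · intro h; exact absurd (Finset.mem_univ _) h
    calc D⁻¹.mulVec (oscB N) = D⁻¹.mulVec (D.mulVec (frakB N)) := by rw [hDB]
      _ = (D⁻¹ * D).mulVec (frakB N) := Matrix.mulVec_mulVec _ _ _
      _ = frakB N := by rw [hinv, Matrix.one_mulVec]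
end

section
/- Let 𝔮 be the 2N×2N matrix with entries 𝔮_{ij} = 1/((i+j)(i+j−1)), 𝔔 = 𝔮⁻¹, 𝔅 = (1,0,…,0)* ∈ ℝ^{2N}, ℭ = −(1/2) 𝔅* 𝔔, 𝔄 the 2N×2N matrix with subdiagonal entries 𝔄_{i+1,i} = −i and all other entries zero, and 𝔐 = diag(1, 2, …, 2N). Then 𝔔 defines a common quadratic Lyapunov function for the matrices −𝔐 and 𝔄 + 𝔅ℭ: both symmetric matrices (−𝔐)*𝔔 + 𝔔(−𝔐) and (𝔄 + 𝔅ℭ)*𝔔 + 𝔔(𝔄 + 𝔅ℭ) are negative definite. -/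
open Matrix

/-- The matrix `𝔮` with entries `𝔮_{ij} = 1/((i+j)(i+j-1))` (1-based indices). -/
noncomputable def qmat (n : ℕ) : Matrix (Fin n) (Fin n) ℝ :=
  Matrix.of fun i j => ((((i.val + 1) + (j.val + 1)) * (((i.val + 1) + (j.val + 1)) - 1) : ℕ) : ℝ)⁻¹

/-- The Hilbert matrix `H_{ij} = 1/(i+j+1)` (0-based). -/
noncomputable def Hmat (n : ℕ) : Matrix (Fin n) (Fin n) ℝ :=
  Matrix.of fun i j => ((i.val + j.val + 1 : ℕ) : ℝ)⁻¹

/-- Positive definiteness of Gram matrices of monomials with a weight. -/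
lemma posDef_of_gram {n : ℕ} (w : ℝ → ℝ) (hw : Continuous w)
    (hw0 : ∀ t ∈ Set.Icc (0:ℝ) 1, 0 ≤ w t) (hwpos : ∀ t ∈ Set.Ioo (0:ℝ) 1, 0 < w t)
    (M : Matrix (Fin n) (Fin n) ℝ)
    (hM : ∀ i j, M i j = ∫ t in (0:ℝ)..1, w t * (t ^ (i:ℕ) * t ^ (j:ℕ))) : M.PosDef := by
  rw [Matrix.posDef_iff_dotProduct_mulVec]; constructor
  · show Mᴴ = M
    ext i j
    simp only [conjTranspose_apply, star_trivial, hM]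
    congr 1; funext t; ring
  · intro x hx
    have key : (star x) ⬝ᵥ (M *ᵥ x) =
        ∫ t in (0:ℝ)..1, w t * (∑ i : Fin n, x i * t ^ (i : ℕ)) ^ 2 := by
      have h1 : ∀ i : Fin n, x i * (M *ᵥ x) i =
          ∫ t in (0:ℝ)..1, ∑ j : Fin n, (x i * t ^ (i:ℕ)) * (x j * t ^ (j:ℕ)) * w t := by
        intro i
        rw [intervalIntegral.integral_finset_sum]
        · rw [mulVec, dotProduct, Finset.mul_sum]
          refine Finset.sum_congr rfl fun j _ => ?_
          calc x i * (M i j * x j) = (x i * x j) * M i j := by ring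
            _ = ∫ t in (0:ℝ)..1, (x i * x j) * (w t * (t ^ (i:ℕ) * t ^ (j:ℕ))) := by
                rw [hM, ← intervalIntegral.integral_const_mul]
            _ = ∫ t in (0:ℝ)..1, (x i * t ^ (i:ℕ)) * (x j * t ^ (j:ℕ)) * w t := by
                congr 1; funext t; ring
        · intro j _
          exact (((continuous_const.mul (continuous_pow _)).mul
            (continuous_const.mul (continuous_pow _))).mul hw).intervalIntegrable _ _
      rw [dotProduct]
      simp only [star_trivial]
      rw [Finset.sum_congr rfl fun i _ => h1 i, ← intervalIntegral.integral_finset_sum]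
      · congr 1; funext t
        rw [sq, Finset.sum_mul_sum, Finset.mul_sum]
        refine Finset.sum_congr rfl fun i _ => ?_
        rw [Finset.mul_sum]
        exact Finset.sum_congr rfl fun j _ => by ring
      · intro i _
        apply Continuous.intervalIntegrable
        exact continuous_finset_sum _ fun j _ =>
          ((continuous_const.mul (continuous_pow _)).mul
            (continuous_const.mul (continuous_pow _))).mul hw
    show (0:ℝ) < star x ⬝ᵥ M *ᵥ x
    rw [key]
    set P : Polynomial ℝ := ∑ i : Fin n, Polynomial.C (x i) * Polynomial.X ^ (i : ℕ) with hP
    have hPev : ∀ t : ℝ, P.eval t = ∑ i : Fin n, x i * t ^ (i : ℕ) := by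
      intro t
      rw [hP, Polynomial.eval_finset_sum]
      simp
    have hPne : P ≠ 0 := by
      obtain ⟨m, hm⟩ := Function.ne_iff.mp hx
      intro h
      apply hm
      have : P.coeff (m : ℕ) = x m := by
        rw [hP, Polynomial.finset_sum_coeff]
        simp only [Polynomial.coeff_C_mul, Polynomial.coeff_X_pow]
        rw [Finset.sum_eq_single m]
        · simp
        · intro b _ hb
          rw [if_neg, mul_zero]
          exact fun hbm => hb (Fin.ext hbm.symm)
        · simp
      rw [h] at this
      simpa using this.symm
    have hfin := Polynomial.finite_setOf_isRoot hPne
    have hIoo : Set.Infinite (Set.Ioo (0:ℝ) 1) := Set.Ioo_infinite (by norm_num)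
    obtain ⟨c, hc⟩ := (hIoo.diff hfin).nonempty
    obtain ⟨hc1, hc2⟩ := hc
    have hpc : (∑ i : Fin n, x i * c ^ (i : ℕ)) ≠ 0 := by
      rw [← hPev]; exact fun h => hc2 h
    apply intervalIntegral.integral_pos (by norm_num)
    · exact (hw.mul ((continuous_finset_sum _ fun i _ =>
        continuous_const.mul (continuous_pow _)).pow 2)).continuousOn
    · intro t ht
      exact mul_nonneg (hw0 t ⟨le_of_lt ht.1, ht.2⟩) (sq_nonneg _)
    · exact ⟨c, ⟨le_of_lt hc1.1, le_of_lt hc1.2⟩,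
        mul_pos (hwpos c hc1) (by positivity)⟩

lemma Hmat_int (n : ℕ) (i j : Fin n) :
    Hmat n i j = ∫ t in (0:ℝ)..1, (1:ℝ) * (t ^ (i:ℕ) * t ^ (j:ℕ)) := by
  have : ∀ t : ℝ, (1:ℝ) * (t ^ (i:ℕ) * t ^ (j:ℕ)) = t ^ ((i:ℕ) + (j:ℕ)) := fun t => by
    rw [pow_add]; ring
  rw [intervalIntegral.integral_congr (fun t _ => this t), integral_pow]
  simp only [Hmat, of_apply, one_pow, zero_pow (Nat.succ_ne_zero _)]
  push_cast
  ring_nf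

lemma qmat_int (n : ℕ) (i j : Fin n) :
    qmat n i j = ∫ t in (0:ℝ)..1, (1 - t) * (t ^ (i:ℕ) * t ^ (j:ℕ)) := by
  have : ∀ t : ℝ, (1 - t) * (t ^ (i:ℕ) * t ^ (j:ℕ)) =
      t ^ ((i:ℕ) + (j:ℕ)) - t ^ ((i:ℕ) + (j:ℕ) + 1) := fun t => by
    rw [pow_add, pow_add]; ring
  rw [intervalIntegral.integral_congr (fun t _ => this t),
    intervalIntegral.integral_sub ((continuous_pow _).intervalIntegrable _ _)
      ((continuous_pow _).intervalIntegrable _ _), integral_pow, integral_pow]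
  have hnat : ((i.val + 1) + (j.val + 1)) * (((i.val + 1) + (j.val + 1)) - 1)
      = ((i:ℕ) + (j:ℕ) + 2) * ((i:ℕ) + (j:ℕ) + 1) := by
    rw [show (i.val + 1) + (j.val + 1) = (i:ℕ) + (j:ℕ) + 2 from by omega]; rfl
  simp only [qmat, of_apply, hnat, one_pow, zero_pow (Nat.succ_ne_zero _)]
  have h1 : ((i:ℕ) + (j:ℕ) + 1 : ℝ) ≠ 0 := by positivity
  have h2 : ((i:ℕ) + (j:ℕ) + 2 : ℝ) ≠ 0 := by positivity
  push_cast
  field_simp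
  ring

lemma qmat_posDef (n : ℕ) : (qmat n).PosDef := by
  apply posDef_of_gram (fun t => 1 - t) (continuous_const.sub continuous_id)
  · intro t ht
    show (0:ℝ) ≤ 1 - t
    linarith [ht.2]
  · intro t ht
    show (0:ℝ) < 1 - t
    linarith [ht.2]
  · exact qmat_int n

lemma Hmat_posDef (n : ℕ) : (Hmat n).PosDef := by
  apply posDef_of_gram (fun _ => (1:ℝ)) continuous_const
  · intro t _; norm_num
  · intro t _; norm_num
  · exact Hmat_int n

lemma posDef_conj {n : ℕ} {H B : Matrix (Fin n) (Fin n) ℝ} (hH : H.PosDef)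
    (hB : IsUnit B.det) : (Bᵀ * H * B).PosDef := by
  have hBt : Bᴴ = Bᵀ := by ext i j; simp
  rw [Matrix.posDef_iff_dotProduct_mulVec]; constructor
  · rw [← hBt]
    exact Matrix.isHermitian_conjTranspose_mul_mul B hH.1
  · intro x hx
    have hBx : B *ᵥ x ≠ 0 := by
      intro h
      apply hx
      have := congrArg (fun v => B⁻¹ *ᵥ v) h
      simpa [Matrix.mulVec_mulVec, Matrix.nonsing_inv_mul B hB] using this
    have := hH.dotProduct_mulVec_pos hBx
    simpa only [← hBt, star_mulVec, Matrix.dotProduct_mulVec, Matrix.vecMul_vecMul] using this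

lemma qmat_entry (n : ℕ) (i j : Fin n) :
    qmat n i j = (((i.val + j.val + 2) * (i.val + j.val + 1) : ℕ) : ℝ)⁻¹ := by
  simp only [qmat, of_apply]
  rw [show (i.val + 1) + (j.val + 1) = i.val + j.val + 2 from by omega]
  rfl

lemma qmat_symm (n : ℕ) : (qmat n)ᵀ = qmat n := by
  ext i j
  rw [transpose_apply, qmat_entry, qmat_entry, Nat.add_comm j.val i.val]

lemma Mq_qM (n : ℕ) :
    (Matrix.diagonal fun i : Fin n => ((i.val : ℝ) + 1)) * qmat n
      + qmat n * (Matrix.diagonal fun i : Fin n => ((i.val : ℝ) + 1)) = Hmat n := by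
  ext i j
  rw [Matrix.add_apply, Matrix.diagonal_mul, Matrix.mul_diagonal, qmat_entry]
  show ((i.val:ℝ)+1) * _ + _ * ((j.val:ℝ)+1) = Hmat n i j
  simp only [Hmat, of_apply]
  have h1 : ((i.val + j.val + 1 : ℕ) : ℝ) ≠ 0 := by positivity
  have h2 : ((i.val + j.val + 2 : ℕ) : ℝ) ≠ 0 := by positivity
  push_cast at *
  field_simp
  ring

lemma Aq_entry (N : ℕ) (i j : Fin (2 * N)) :
    (frakA N * qmat (2 * N)) i j =
      -(i.val : ℝ) * (((i.val + j.val + 1) * (i.val + j.val) : ℕ) : ℝ)⁻¹ := by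
  rw [Matrix.mul_apply]
  rcases Nat.eq_zero_or_pos i.val with h0 | hpos
  · rw [Finset.sum_eq_zero, h0]
    · simp
    · intro k _
      simp only [frakA, of_apply]
      rw [if_neg (by omega), zero_mul]
  · obtain ⟨m, hm⟩ : ∃ m, i.val = m + 1 := ⟨i.val - 1, by omega⟩
    have hmlt : m < 2 * N := by omega
    rw [Finset.sum_eq_single (⟨m, hmlt⟩ : Fin (2 * N))]
    · simp only [frakA, of_apply]
      rw [if_pos (by simp [hm]), qmat_entry]
      show -((m:ℝ)+1) * _ = _
      rw [show (⟨m, hmlt⟩ : Fin (2*N)).val + j.val + 2 = i.val + j.val + 1 from by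
            simp only [Fin.val_mk]; omega,
        show (⟨m, hmlt⟩ : Fin (2*N)).val + j.val + 1 = i.val + j.val from by
            simp only [Fin.val_mk]; omega]
      push_cast [hm]
      ring
    · intro b _ hb
      simp only [frakA, of_apply]
      rw [if_neg, zero_mul]
      intro hcon
      apply hb
      apply Fin.ext
      simp only [Fin.val_mk]
      omega
    · intro h
      exact absurd (Finset.mem_univ _) h

lemma key2 (N : ℕ) :
    frakA N * qmat (2 * N) + qmat (2 * N) * (frakA N)ᵀ
      - vecMulVec (frakB N) (frakB N) = -(Hmat (2 * N)) := by
  have hqAT : qmat (2 * N) * (frakA N)ᵀ = (frakA N * qmat (2 * N))ᵀ := by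
    rw [Matrix.transpose_mul, qmat_symm]
  rw [hqAT]
  ext i j
  simp only [Matrix.sub_apply, Matrix.add_apply, Matrix.neg_apply, Matrix.transpose_apply,
    Aq_entry, vecMulVec_apply, Hmat, of_apply, frakB]
  rw [show j.val + i.val + 1 = i.val + j.val + 1 from by omega,
      show j.val + i.val = i.val + j.val from by omega]
  rcases Nat.eq_zero_or_pos i.val with hi | hi <;> rcases Nat.eq_zero_or_pos j.val with hj | hj
  · rw [hi, hj]; norm_num
  · have h1 : ((j.val:ℝ)) ≠ 0 := Nat.cast_ne_zero.mpr (by omega)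
    have h2 : ((j.val:ℝ)+1) ≠ 0 := by positivity
    rw [hi, if_pos rfl, if_neg (by omega : ¬ (j.val = 0))]
    push_cast
    field_simp
    ring
  · have h1 : ((i.val:ℝ)) ≠ 0 := Nat.cast_ne_zero.mpr (by omega)
    have h2 : ((i.val:ℝ)+1) ≠ 0 := by positivity
    rw [hj, if_neg (by omega : ¬ (i.val = 0)), if_pos rfl]
    push_cast
    field_simp
    ring
  · have h1 : ((i.val:ℝ) + (j.val:ℝ)) ≠ 0 := by
      have h : ((i.val + j.val : ℕ):ℝ) ≠ 0 := Nat.cast_ne_zero.mpr (by omega)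
      push_cast at h; exact h
    have h2 : ((i.val:ℝ) + (j.val:ℝ) + 1) ≠ 0 := by positivity
    rw [if_neg (by omega : ¬ (i.val = 0)), if_neg (by omega : ¬ (j.val = 0))]
    push_cast
    field_simp
    ring

/-- With `𝔔 = 𝔮⁻¹`, `ℭ = -(1/2) 𝔅* 𝔔` and `𝔐 = diag(1, …, 2N)`,
`𝔔` is a common quadratic Lyapunov function for `-𝔐` and `𝔄 + 𝔅ℭ`: both symmetric
matrices `(-𝔐)*𝔔 + 𝔔(-𝔐)` and `(𝔄+𝔅ℭ)*𝔔 + 𝔔(𝔄+𝔅ℭ)` are negative definite. -/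
theorem common_lyapunov_function (N : ℕ) (hN : 0 < N)
    (Q : Matrix (Fin (2 * N)) (Fin (2 * N)) ℝ) (hQ : Q = (qmat (2 * N))⁻¹)
    (C : Fin (2 * N) → ℝ) (hC : C = -(1 / 2 : ℝ) • Matrix.vecMul (frakB N) Q)
    (M : Matrix (Fin (2 * N)) (Fin (2 * N)) ℝ)
    (hM : M = Matrix.diagonal fun i => ((i.val : ℝ) + 1)) :
    (-((-M)ᵀ * Q + Q * (-M))).PosDef ∧
    (-((frakA N + vecMulVec (frakB N) C)ᵀ * Q +
        Q * (frakA N + vecMulVec (frakB N) C))).PosDef := by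
  have hqPD : (qmat (2 * N)).PosDef := qmat_posDef (2 * N)
  have hHPD : (Hmat (2 * N)).PosDef := Hmat_posDef (2 * N)
  have hdet : IsUnit (qmat (2 * N)).det := hqPD.det_pos.ne'.isUnit
  have hQq : Q * qmat (2 * N) = 1 := by rw [hQ]; exact Matrix.nonsing_inv_mul _ hdet
  have hqQ : qmat (2 * N) * Q = 1 := by rw [hQ]; exact Matrix.mul_nonsing_inv _ hdet
  have hQPD : Q.PosDef := by rw [hQ]; exact hqPD.inv
  have hQdet : IsUnit Q.det := hQPD.det_pos.ne'.isUnit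
  have hQsym : Qᵀ = Q := by
    rw [hQ, Matrix.transpose_nonsing_inv, qmat_symm]
  have t1 : ∀ X : Matrix (Fin (2 * N)) (Fin (2 * N)) ℝ, Q * (X * qmat (2 * N)) * Q = Q * X := by
    intro X
    rw [Matrix.mul_assoc Q (X * qmat (2 * N)) Q, Matrix.mul_assoc X (qmat (2 * N)) Q, hqQ,
      Matrix.mul_one]
  have t2 : ∀ X : Matrix (Fin (2 * N)) (Fin (2 * N)) ℝ, Q * (qmat (2 * N) * X) * Q = X * Q := by
    intro X
    rw [← Matrix.mul_assoc Q (qmat (2 * N)) X, hQq, Matrix.one_mul]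
  constructor
  · -- first Lyapunov inequality
    have e : -((-M)ᵀ * Q + Q * (-M)) = Qᵀ * Hmat (2 * N) * Q := by
      rw [hQsym, ← Mq_qM (2 * N), Matrix.mul_add Q, Matrix.add_mul, t1, t2, hM]
      simp only [Matrix.transpose_neg, Matrix.diagonal_transpose, Matrix.neg_mul,
        Matrix.mul_neg, neg_add_rev, neg_neg]
    rw [e]
    exact posDef_conj hHPD hQdet
  · -- second Lyapunov inequality
    set S := frakA N + vecMulVec (frakB N) C with hS
    set V := vecMulVec (frakB N) (frakB N) with hV
    have hCq : C ᵥ* qmat (2 * N) = (-(1/2) : ℝ) • frakB N := by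
      rw [hC, Matrix.smul_vecMul, Matrix.vecMul_vecMul, hQq, Matrix.vecMul_one]
    have hBCq : vecMulVec (frakB N) C * qmat (2 * N) = (-(1/2) : ℝ) • V := by
      ext i j
      rw [Matrix.mul_apply]
      have h : ∀ k, vecMulVec (frakB N) C i k * qmat (2 * N) k j
          = frakB N i * (C k * qmat (2 * N) k j) := by
        intro k; rw [vecMulVec_apply]; ring
      rw [Finset.sum_congr rfl fun k _ => h k, ← Finset.mul_sum]
      have hvm : (∑ k, C k * qmat (2 * N) k j) = (C ᵥ* qmat (2 * N)) j := rfl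
      rw [hvm, hCq]
      simp only [hV, Matrix.smul_apply, vecMulVec_apply, Pi.smul_apply, smul_eq_mul]
      ring
    have hAqT : (frakA N * qmat (2 * N))ᵀ = qmat (2 * N) * (frakA N)ᵀ := by
      rw [Matrix.transpose_mul, qmat_symm]
    have hVT : Vᵀ = V := by
      ext i j; simp only [hV, Matrix.transpose_apply, vecMulVec_apply]; ring
    have hSq : S * qmat (2 * N) + qmat (2 * N) * Sᵀ = -(Hmat (2 * N)) := by
      have h1 : qmat (2 * N) * Sᵀ = (S * qmat (2 * N))ᵀ := by
        rw [Matrix.transpose_mul, qmat_symm]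
      rw [h1, hS, Matrix.add_mul, hBCq, Matrix.transpose_add, Matrix.transpose_smul, hVT, hAqT,
        ← key2 N]
      module
    have e2 : -(Sᵀ * Q + Q * S) = Qᵀ * Hmat (2 * N) * Q := by
      rw [hQsym, show Hmat (2 * N) = -(S * qmat (2 * N) + qmat (2 * N) * Sᵀ) from by
        rw [hSq, neg_neg]]
      rw [Matrix.mul_neg, Matrix.neg_mul,
        Matrix.mul_add Q (S * qmat (2 * N)) (qmat (2 * N) * Sᵀ),
        Matrix.add_mul (Q * (S * qmat (2 * N))) (Q * (qmat (2 * N) * Sᵀ)) Q,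
        t1 S, t2 Sᵀ, add_comm (Q * S) (Sᵀ * Q)]
    rw [e2]
    exact posDef_conj hHPD hQdet
end

section
/- Let 𝔔 be a symmetric positive definite 2N×2N real matrix, 𝔅 = (1,0,…,0)* ∈ ℝ^{2N}, ℭ = −(1/2)𝔅*𝔔, and κ > 0. Then for every y ∈ ℝ^{2N} with ⟨𝔔 y, y⟩ = κ², one has |ℭ y| ≤ (κ/2) √(𝔔_{11}). Consequently, with δ(T) = diag(T^{−1},…,T^{−2N}) and T(x) the unique positive solution of ⟨𝔔δ(T)x, δ(T)x⟩ = κ² for x ≠ 0, the feedback control 𝔲(x) = ℭ δ(T(x)) x satisfies |𝔲(x)| ≤ (κ/2)√(𝔔_{11}) for all x ≠ 0. -/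
open Matrix

/-- The diagonal scaling matrix `δ(T) = diag(T⁻¹, T⁻², …, T^{-2N})`. -/
noncomputable def deltaT (N : ℕ) (T : ℝ) : Matrix (Fin (2 * N)) (Fin (2 * N)) ℝ :=
  Matrix.diagonal fun i => (T ^ (i.val + 1))⁻¹

/-- Cauchy–Schwarz for the real dot product. -/
lemma dot_cs {n : ℕ} (a b : Fin n → ℝ) :
    |a ⬝ᵥ b| ≤ Real.sqrt (a ⬝ᵥ a) * Real.sqrt (b ⬝ᵥ b) := by
  have h : (a ⬝ᵥ b) ^ 2 ≤ (a ⬝ᵥ a) * (b ⬝ᵥ b) := by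
    have := Finset.sum_mul_sq_le_sq_mul_sq Finset.univ a b
    simpa [dotProduct, sq, mul_comm] using this
  have haa : 0 ≤ a ⬝ᵥ a := by
    simp only [dotProduct, ← sq]
    positivity
  calc |a ⬝ᵥ b| = Real.sqrt ((a ⬝ᵥ b) ^ 2) := by rw [Real.sqrt_sq_eq_abs]
    _ ≤ Real.sqrt ((a ⬝ᵥ a) * (b ⬝ᵥ b)) := Real.sqrt_le_sqrt h
    _ = Real.sqrt (a ⬝ᵥ a) * Real.sqrt (b ⬝ᵥ b) := Real.sqrt_mul haa _

/-- For a symmetric positive definite `𝔔`, `𝔅 = (1,0,…,0)*` and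
`ℭ = -(1/2)𝔅*𝔔`: on the ellipsoid `⟨𝔔y, y⟩ = κ²` one has `|ℭ y| ≤ (κ/2)√(𝔔₁₁)`;
consequently the feedback control `𝔲(x) = ℭ δ(T(x)) x`, where `T(x) > 0` solves
`⟨𝔔δ(T)x, δ(T)x⟩ = κ²`, satisfies `|𝔲(x)| ≤ (κ/2)√(𝔔₁₁)` for all `x ≠ 0`. -/
theorem feedback_control_bounded (N : ℕ) (hN : 0 < N)
    (Q : Matrix (Fin (2 * N)) (Fin (2 * N)) ℝ) (hQ : Q.PosDef)
    (κ : ℝ) (hκ : 0 < κ)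
    (B C : Fin (2 * N) → ℝ)
    (hB : B = fun i => if i.val = 0 then 1 else 0)
    (hC : C = -(1 / 2 : ℝ) • Matrix.vecMul B Q) :
    (∀ y : Fin (2 * N) → ℝ, Q.mulVec y ⬝ᵥ y = κ ^ 2 →
      |C ⬝ᵥ y| ≤ κ / 2 * Real.sqrt (Q ⟨0, by omega⟩ ⟨0, by omega⟩)) ∧
    (∀ x : Fin (2 * N) → ℝ, x ≠ 0 → ∀ T : ℝ, 0 < T →
      Q.mulVec ((deltaT N T).mulVec x) ⬝ᵥ (deltaT N T).mulVec x = κ ^ 2 →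
      |C ⬝ᵥ (deltaT N T).mulVec x| ≤ κ / 2 * Real.sqrt (Q ⟨0, by omega⟩ ⟨0, by omega⟩)) := by
  have hpsd := hQ.posSemidef
  open scoped MatrixOrder in
  set S := CFC.sqrt Q with hS
  have hSsym : Sᵀ = S := by
    open scoped MatrixOrder in
    have := (CFC.sqrt_nonneg Q).posSemidef.isHermitian
    simpa [Matrix.IsHermitian] using this
  open scoped MatrixOrder in
  have hSS : S * S = Q := CFC.sqrt_mul_sqrt_self Q hpsd.nonneg
  -- key rewriting: u ⬝ᵥ Q.mulVec v = (S.mulVec u) ⬝ᵥ (S.mulVec v)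
  have key : ∀ u v : Fin (2 * N) → ℝ,
      u ⬝ᵥ Q.mulVec v = (S.mulVec u) ⬝ᵥ (S.mulVec v) := by
    intro u v
    rw [← hSS, ← Matrix.mulVec_mulVec, Matrix.dotProduct_mulVec u S,
      ← Matrix.mulVec_transpose, hSsym]
  have hBQB : B ⬝ᵥ Q.mulVec B = Q ⟨0, by omega⟩ ⟨0, by omega⟩ := by
    subst hB
    simp only [dotProduct, Matrix.mulVec, dotProduct,
      ite_mul, one_mul, zero_mul, mul_ite, mul_one, mul_zero]
    have h0 : ∀ x : Fin (2 * N), (x.val = 0) = (x = ⟨0, by omega⟩) := fun x => by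
      simp [Fin.ext_iff]
    simp only [h0, Finset.sum_ite_eq', Finset.mem_univ, if_true]
  have main : ∀ y : Fin (2 * N) → ℝ, Q.mulVec y ⬝ᵥ y = κ ^ 2 →
      |C ⬝ᵥ y| ≤ κ / 2 * Real.sqrt (Q ⟨0, by omega⟩ ⟨0, by omega⟩) := by
    intro y hy
    have hCdot : C ⬝ᵥ y = -(1 / 2 : ℝ) * ((S.mulVec B) ⬝ᵥ (S.mulVec y)) := by
      rw [hC, ← key, Matrix.dotProduct_mulVec]
      simp [smul_dotProduct]
    have haa : (S.mulVec B) ⬝ᵥ (S.mulVec B) = Q ⟨0, by omega⟩ ⟨0, by omega⟩ := by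
      rw [← key]; exact hBQB
    have hbb : (S.mulVec y) ⬝ᵥ (S.mulVec y) = κ ^ 2 := by
      rw [← key, dotProduct_comm]; exact hy
    have := dot_cs (S.mulVec B) (S.mulVec y)
    rw [haa, hbb, Real.sqrt_sq hκ.le] at this
    rw [hCdot, abs_mul]
    have h2 : |(-(1 / 2 : ℝ))| = 1 / 2 := by norm_num
    rw [h2]
    calc (1 / 2 : ℝ) * |(S.mulVec B) ⬝ᵥ (S.mulVec y)|
        ≤ 1 / 2 * (Real.sqrt (Q ⟨0, by omega⟩ ⟨0, by omega⟩) * κ) := by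
          apply mul_le_mul_of_nonneg_left this (by norm_num)
      _ = κ / 2 * Real.sqrt (Q ⟨0, by omega⟩ ⟨0, by omega⟩) := by ring
  exact ⟨main, fun x _ T _ h => main _ h⟩
end

section
/- Let 𝔮 be the 2N×2N matrix with entries 𝔮_{ij} = 1/((i+j)(i+j−1)) (1 ≤ i, j ≤ 2N). Then 𝔮 is invertible and every entry of 𝔔 = 𝔮⁻¹ is an even integer. -/
open Finset Polynomial Nat

namespace QAux

lemma fact_ratio (c k : ℕ) : c ! * ∏ i ∈ range k, (c + 1 + i) = (c + k)! := by
  induction k with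
  | zero => simp
  | succ k ih =>
    rw [Finset.prod_range_succ, ← mul_assoc, ih, show c + (k+1) = (c + k) + 1 by ring,
      Nat.factorial_succ]
    ring

lemma fact_desc (s : ℕ) : ∀ j, j ≤ s → (s - j)! * ∏ i ∈ range j, (s - i) = s ! := by
  intro j
  induction j with
  | zero => simp
  | succ j ih =>
    intro h
    have h2 : (s - j)! = (s - j) * (s - (j+1))! := by
      have : s - j = (s - (j+1)) + 1 := by omega
      rw [this, Nat.factorial_succ]
    calc (s - (j+1))! * ∏ i ∈ range (j+1), (s - i)
        = (s - j) * (s - (j+1))! * ∏ i ∈ range j, (s - i) := by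
          rw [Finset.prod_range_succ]; ring
      _ = (s - j)! * ∏ i ∈ range j, (s - i) := by rw [← h2]
      _ = s ! := ih (by omega)

/-- coefficients of (scaled) shifted Jacobi polynomials -/
noncomputable def ac (m j : ℕ) : ℝ := (-1)^(m+j) * (m.choose j) * ((m+j+1).choose j)

noncomputable def Pm (m : ℕ) : ℝ[X] :=
  ∑ j ∈ range (m+1), Polynomial.C (ac m j) *
    ((∏ a ∈ Icc 1 j, (X + Polynomial.C (a:ℝ))) * ∏ a ∈ Icc (j+3) (m+2), (X + Polynomial.C (a:ℝ)))

noncomputable def Rm (m : ℕ) : ℝ[X] :=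
  Polynomial.C ((m:ℝ)+1) * ∏ a ∈ range m, (X - Polynomial.C (a:ℝ))

lemma evalPm (m : ℕ) (x : ℝ) : (Pm m).eval x
    = ∑ j ∈ range (m+1), ac m j *
      ((∏ a ∈ Icc 1 j, (x + a)) * ∏ a ∈ Icc (j+3) (m+2), (x + a)) := by
  simp [Pm, eval_finset_sum, eval_prod]

lemma evalRm (m : ℕ) (x : ℝ) : (Rm m).eval x
    = ((m:ℝ)+1) * ∏ a ∈ range m, (x - a) := by
  simp [Rm, eval_prod]

/-- first product, evaluated at `-(t+1)`, when `j ≤ t` -/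
lemma prodA (t j : ℕ) (h : j ≤ t) :
    ∏ a ∈ Icc 1 j, (-((t:ℝ)+1) + a) = (-1)^j * ((∏ i ∈ range j, (t - i) : ℕ) : ℝ) := by
  have : ∀ a ∈ Icc 1 j, (-((t:ℝ)+1) + a) = (-1) * (((t + 1 - a : ℕ)) : ℝ) := by
    intro a ha
    rw [Finset.mem_Icc] at ha
    have : ((t + 1 - a : ℕ) : ℝ) = (t:ℝ) + 1 - a := by
      have : a ≤ t + 1 := by omega
      push_cast [this]
      ring
    rw [this]; ring
  rw [Finset.prod_congr rfl this, Finset.prod_mul_distrib, Finset.prod_const, Nat.card_Icc,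
    Nat.add_sub_cancel]
  congr 1
  rw [show Finset.Icc 1 j = Finset.Ico 1 (j+1) from (Finset.Ico_add_one_right_eq_Icc 1 j).symm,
    Finset.prod_Ico_eq_prod_range, show j + 1 - 1 = j by omega, Nat.cast_prod]
  apply Finset.prod_congr rfl
  intro i hi
  rw [Finset.mem_range] at hi
  have h1 : t + 1 - (1 + i) = t - i := by omega
  norm_num [h1]

/-- second product, evaluated at `-(t+1)`, when `t ≤ j + 1` -/
lemma prodB (t j m : ℕ) (h : t ≤ j + 1) :
    ∏ a ∈ Icc (j+3) (m+2), (-((t:ℝ)+1) + a)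
      = ((∏ i ∈ range (m - j), (j + 2 - t + i) : ℕ) : ℝ) := by
  rw [show Finset.Icc (j+3) (m+2) = Finset.Ico (j+3) (m+3) from (Finset.Ico_add_one_right_eq_Icc _ _).symm,
    Finset.prod_Ico_eq_prod_range]
  rw [show m + 3 - (j + 3) = m - j by omega]
  rw [Nat.cast_prod]
  apply Finset.prod_congr rfl
  intro i hi
  have h1 : (j + 2 - t) + i = (j + 3 + i) - (t+1) := by omega
  rw [h1]
  have h2 : t + 1 ≤ j + 3 + i := by omega
  push_cast [h2]
  ring

/-- Key binomial identity. -/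
lemma KB (u v : ℕ) :
    (((u+1)! * (v+1)! * (((u+v+1).choose (u+1)) * ((u+v+1+(u+1)+1).choose (u+1))
      + ((u+v+1).choose u) * ((u+v+1+(u+1)).choose u)) * (u+1)! : ℕ) : ℝ)
    = (((u:ℝ)+(v:ℝ)+2)) * (((u+1)+(u+v+1))! : ℕ) := by
  have c1 : (((u+v+1).choose (u+1) : ℕ) : ℝ) = (u+v+1)! / ((u+1)! * v !) := by
    rw [Nat.cast_choose ℝ (by omega : u+1 ≤ u+v+1), show u+v+1-(u+1) = v by omega]
  have c2 : (((u+v+1+(u+1)+1).choose (u+1) : ℕ) : ℝ)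
      = (2*u+v+3)! / ((u+1)! * (u+v+2)!) := by
    rw [show u+v+1+(u+1)+1 = 2*u+v+3 by ring, Nat.cast_choose ℝ (by omega),
      show 2*u+v+3-(u+1) = u+v+2 by omega]
  have c3 : (((u+v+1).choose u : ℕ) : ℝ) = (u+v+1)! / (u ! * (v+1)!) := by
    rw [Nat.cast_choose ℝ (by omega), show u+v+1-u = v+1 by omega]
  have c4 : (((u+v+1+(u+1)).choose u : ℕ) : ℝ) = (2*u+v+2)! / (u ! * (u+v+2)!) := by
    rw [show u+v+1+(u+1) = 2*u+v+2 by ring, Nat.cast_choose ℝ (by omega),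
      show 2*u+v+2-u = u+v+2 by omega]
  push_cast [c1, c2, c3, c4]
  have e1 : ((2*u+v+3)! : ℝ) = (2*(u:ℝ)+v+3) * (2*u+v+2)! := by
    rw [show 2*u+v+3 = (2*u+v+2)+1 by ring, Nat.factorial_succ]
    push_cast; ring
  have e2 : (((u+1)+(u+v+1))! : ℝ) = ((2*u+v+2)! : ℕ) := by norm_num; ring_nf
  have e3 : (((u+1))! : ℝ) = ((u:ℝ)+1) * u ! := by
    rw [Nat.factorial_succ]; push_cast; ring
  have e4 : (((v+1))! : ℝ) = ((v:ℝ)+1) * v ! := by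
    rw [Nat.factorial_succ]; push_cast; ring
  have e5 : (((u+v+2))! : ℝ) = ((u:ℝ)+v+2) * (u+v+1)! := by
    rw [show u+v+2 = (u+v+1)+1 by ring, Nat.factorial_succ]; push_cast; ring
  rw [e1, e2, e3, e4, e5]
  have n1 : ((u:ℝ)+1) ≠ 0 := by positivity
  have n2 : ((v:ℝ)+1) ≠ 0 := by positivity
  have n3 : ((u:ℝ)+v+2) ≠ 0 := by positivity
  have f1 : ((u ! : ℕ) : ℝ) ≠ 0 := Nat.cast_ne_zero.mpr u.factorial_ne_zero
  have f2 : ((v ! : ℕ) : ℝ) ≠ 0 := Nat.cast_ne_zero.mpr v.factorial_ne_zero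
  have f3 : (((u+v+1)! : ℕ) : ℝ) ≠ 0 := Nat.cast_ne_zero.mpr (u+v+1).factorial_ne_zero
  field_simp
  ring


lemma natDegree_Pm (m : ℕ) : (Pm m).natDegree ≤ m := by
  apply Polynomial.natDegree_sum_le_of_forall_le
  intro j hj
  rw [Finset.mem_range] at hj
  have h1 : (∏ a ∈ Icc 1 j, (X + Polynomial.C (a:ℝ))).natDegree ≤ j := by
    refine (Polynomial.natDegree_prod_le _ _).trans ?_
    have : ∀ a ∈ Icc 1 j, (X + Polynomial.C (a:ℝ)).natDegree = 1 := by
      intro a _; exact Polynomial.natDegree_X_add_C _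
    rw [Finset.sum_congr rfl this, Finset.sum_const, Nat.card_Icc, smul_eq_mul]
    omega
  have h2 : (∏ a ∈ Icc (j+3) (m+2), (X + Polynomial.C (a:ℝ))).natDegree ≤ m - j := by
    refine (Polynomial.natDegree_prod_le _ _).trans ?_
    have : ∀ a ∈ Icc (j+3) (m+2), (X + Polynomial.C (a:ℝ)).natDegree = 1 := by
      intro a _; exact Polynomial.natDegree_X_add_C _
    rw [Finset.sum_congr rfl this, Finset.sum_const, Nat.card_Icc, smul_eq_mul]
    omega
  calc (Polynomial.C (ac m j) * ((∏ a ∈ Icc 1 j, (X + Polynomial.C (a:ℝ))) *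
        ∏ a ∈ Icc (j+3) (m+2), (X + Polynomial.C (a:ℝ)))).natDegree
      ≤ (Polynomial.C (ac m j)).natDegree + ((∏ a ∈ Icc 1 j, (X + Polynomial.C (a:ℝ))) *
        ∏ a ∈ Icc (j+3) (m+2), (X + Polynomial.C (a:ℝ))).natDegree :=
        Polynomial.natDegree_mul_le
    _ ≤ 0 + ((∏ a ∈ Icc 1 j, (X + Polynomial.C (a:ℝ))).natDegree +
        (∏ a ∈ Icc (j+3) (m+2), (X + Polynomial.C (a:ℝ))).natDegree) := by
        rw [Polynomial.natDegree_C]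
        exact Nat.add_le_add le_rfl Polynomial.natDegree_mul_le
    _ ≤ m := by omega

lemma natDegree_Rm (m : ℕ) : (Rm m).natDegree ≤ m := by
  have hp : (∏ a ∈ range m, (X - Polynomial.C (a:ℝ))).natDegree ≤ m := by
    refine (Polynomial.natDegree_prod_le _ _).trans ?_
    have : ∀ a ∈ range m, (X - Polynomial.C (a:ℝ)).natDegree = 1 := by
      intro a _; exact Polynomial.natDegree_X_sub_C _
    rw [Finset.sum_congr rfl this, Finset.sum_const, smul_eq_mul, Finset.card_range]
    omega
  refine Polynomial.natDegree_mul_le.trans ?_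
  rw [Polynomial.natDegree_C]
  omega


lemma H1 (t : ℕ) : (∏ i ∈ range t, (t - i)) = t ! := by
  have := fact_desc t t le_rfl
  simpa using this

lemma H2 (u : ℕ) : (∏ i ∈ range u, (u + 1 - i)) = (u+1)! := by
  have := fact_desc (u+1) u (by omega)
  rw [show u + 1 - u = 1 by omega] at this
  simpa using this

lemma H3 (k : ℕ) : (∏ i ∈ range k, (1 + i)) = k ! := by
  rw [← Finset.prod_range_add_one_eq_factorial k]
  exact Finset.prod_congr rfl fun i _ => by omega

lemma H4 (k : ℕ) : (∏ i ∈ range k, (2 + i)) = (k+1)! := by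
  have h := fact_ratio 1 k
  rw [show (1:ℕ)! = 1 by rfl, one_mul] at h
  calc (∏ i ∈ range k, (2 + i)) = ∏ i ∈ range k, (1 + 1 + i) :=
        Finset.prod_congr rfl fun i _ => by omega
    _ = (1+k)! := h
    _ = (k+1)! := by rw [Nat.add_comm]

lemma eval_eq (m t : ℕ) (ht : t ≤ m) :
    (Pm m).eval (-((t:ℝ)+1)) = (Rm m).eval (-((t:ℝ)+1)) := by
  rw [evalPm, evalRm]
  have hR : ∏ a ∈ range m, (-((t:ℝ)+1) - a)
      = (-1)^m * ((∏ i ∈ range m, (t+1+i) : ℕ) : ℝ) := by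
    have h : ∀ a ∈ range m, (-((t:ℝ)+1) - a) = (-1) * (((t+1+a : ℕ)):ℝ) := by
      intro a _; push_cast; ring
    rw [Finset.prod_congr rfl h, Finset.prod_mul_distrib, Finset.prod_const,
      Finset.card_range, Nat.cast_prod]
  rcases Nat.eq_zero_or_pos t with h0 | hpos
  · subst h0
    rw [Finset.sum_eq_single_of_mem 0 (Finset.mem_range.mpr (by omega)) ?side]
    case side =>
      intro j hj hj0
      have h1 : (1:ℕ) ∈ Icc 1 j := Finset.mem_Icc.mpr (by omega)
      rw [Finset.prod_eq_zero h1 (by push_cast; ring)]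
      ring
    rw [Finset.Icc_eq_empty (by omega : ¬ (1:ℕ) ≤ 0), Finset.prod_empty,
      prodB 0 0 m (by omega), hR]
    have hb : m - 0 = m := by omega
    have hc : ∀ i, 0 + 2 - 0 + i = 2 + i := fun i => by omega
    rw [hb, Finset.prod_congr rfl (fun i _ => hc i), H4]
    have hd : ∀ i, 0 + 1 + i = 1 + i := fun i => by omega
    rw [Finset.prod_congr rfl (fun i _ => hd i), H3]
    rw [ac]
    push_cast [Nat.factorial_succ, Nat.choose_zero_right]
    ring
  · obtain ⟨u, rfl⟩ : ∃ u, t = u+1 := ⟨t-1, by omega⟩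
    have hsub : ({u, u+1} : Finset ℕ) ⊆ range (m+1) := by
      intro x hx
      rw [Finset.mem_insert, Finset.mem_singleton] at hx
      rw [Finset.mem_range]
      omega
    rw [← Finset.sum_subset hsub ?zeros]
    case zeros =>
      intro j hj hjn
      rw [Finset.mem_range] at hj
      rw [Finset.mem_insert, Finset.mem_singleton] at hjn
      push_neg at hjn
      rcases lt_or_gt_of_ne hjn.2 with hlt | hgt
      · -- j < u+1 and j ≠ u, so j + 3 ≤ u + 2 ≤ m + 2 : second product vanishes
        have h1 : (u+2:ℕ) ∈ Icc (j+3) (m+2) := Finset.mem_Icc.mpr (by omega)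
        rw [Finset.prod_eq_zero h1 (by push_cast; ring)]
        ring
      · -- j > u+1 : first product vanishes at a = u+2
        have h1 : (u+2:ℕ) ∈ Icc 1 j := Finset.mem_Icc.mpr (by omega)
        rw [Finset.prod_eq_zero h1 (by push_cast; ring)]
        ring
    rw [Finset.sum_pair (by omega : u ≠ u+1)]
    rw [prodA (u+1) u (by omega), prodA (u+1) (u+1) (by omega),
      prodB (u+1) u m (by omega), prodB (u+1) (u+1) m (by omega), hR]
    have e1 : (∏ i ∈ range u, (u + 1 - i)) = (u+1)! := H2 u
    have e2 : (∏ i ∈ range (u+1), (u + 1 - i)) = (u+1)! := H1 (u+1)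
    have e3 : (∏ i ∈ range (m - u), (u + 2 - (u+1) + i)) = (m-u)! := by
      rw [Finset.prod_congr rfl (fun i _ => show u + 2 - (u+1) + i = 1 + i by omega), H3]
    have e4 : (∏ i ∈ range (m - (u+1)), (u + 1 + 2 - (u+1) + i)) = (m-u)! := by
      rw [Finset.prod_congr rfl (fun i _ => show u + 1 + 2 - (u+1) + i = 2 + i by omega), H4,
        show m - (u+1) + 1 = m - u by omega]
    rw [e1, e2, e3, e4]
    -- now pure arithmetic with KB
    obtain ⟨v, rfl⟩ : ∃ v, m = u + v + 1 := ⟨m - u - 1, by omega⟩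
    have kb := KB u v
    rw [ac, ac]
    have hfac : (((u+1)! : ℕ) : ℝ) ≠ 0 := Nat.cast_ne_zero.mpr (u+1).factorial_ne_zero
    rw [show u + v + 1 - u = v + 1 by omega]
    rw [show u + v + 1 + u + 1 = u + v + 1 + (u+1) by ring]
    have p1 : (-1:ℝ)^(u+v+1+u) = (-1)^(v+1) := by
      rw [show u+v+1+u = 2*u+(v+1) by ring, pow_add, pow_mul]
      norm_num
    have p2 : (-1:ℝ)^(u+v+1+(u+1)) = (-1)^v := by
      rw [show u+v+1+(u+1) = 2*(u+1)+v by ring, pow_add, pow_mul]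
      norm_num
    have p3 : (-1:ℝ)^(u+v+1) = (-1)^u * ((-1)^v * (-1)) := by
      rw [show u+v+1 = u+(v+1) by ring, pow_add, pow_succ]
    have p4 : (-1:ℝ)^(u+1) = (-1)^u * (-1) := pow_succ _ _
    have p5 : (-1:ℝ)^(v+1) = (-1)^v * (-1) := pow_succ _ _
    rw [p1, p2, p3, p4, p5]
    have hw := fact_ratio (u+1) (u+v+1)
    have hwR : (((u+1)! : ℕ) : ℝ) * ((∏ i ∈ range (u+v+1), (u+1+1+i) : ℕ) : ℝ)
        = (((u+1+(u+v+1))! : ℕ) : ℝ) := by exact_mod_cast congrArg (Nat.cast (R := ℝ)) hw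
    apply mul_left_cancel₀ hfac
    push_cast at kb ⊢
    push_cast at hwR
    linear_combination ((-1:ℝ)^u * (-1)^v * (-1)) * kb
      - (((u:ℝ)+(v:ℝ)+2) * ((-1:ℝ)^u * (-1)^v * (-1))) * hwR

lemma P_eq_R (m : ℕ) : Pm m = Rm m := by
  have hinj : Set.InjOn (fun t : ℕ => -((t:ℝ)+1)) (range (m+1)) := by
    intro a _ b _ hab
    simp only at hab
    have : (a:ℝ) = b := by linarith
    exact_mod_cast this
  apply Polynomial.eq_of_degree_sub_lt_of_eval_finset_eq
    ((range (m+1)).image (fun t : ℕ => -((t:ℝ)+1)))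
  · have hcard : #((range (m+1)).image fun t : ℕ => -((t:ℝ)+1)) = m+1 := by
      rw [Finset.card_image_of_injOn hinj, Finset.card_range]
    rw [hcard]
    have dP : (Pm m).degree ≤ (m : WithBot ℕ) :=
      (Polynomial.degree_le_natDegree).trans (by exact_mod_cast natDegree_Pm m)
    have dR : (Rm m).degree ≤ (m : WithBot ℕ) :=
      (Polynomial.degree_le_natDegree).trans (by exact_mod_cast natDegree_Rm m)
    calc (Pm m - Rm m).degree ≤ max (Pm m).degree (Rm m).degree :=
          Polynomial.degree_sub_le _ _
      _ ≤ (m : WithBot ℕ) := max_le dP dR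
      _ < ((m+1 : ℕ) : WithBot ℕ) := by exact_mod_cast Nat.lt_succ_self m
  · intro x hx
    obtain ⟨t, ht, rfl⟩ := Finset.mem_image.mp hx
    exact eval_eq m t (by rw [Finset.mem_range] at ht; omega)

lemma sum_q (n i m : ℕ) (hm : m < n) :
    ∑ j ∈ range n, ac m j * ((((i+j+2)*(i+j+1) : ℕ)) : ℝ)⁻¹
      = (((m:ℝ)+1) * ∏ a ∈ range m, ((i:ℝ) - a)) / ∏ a ∈ Icc 1 (m+2), ((i:ℝ)+a) := by
  have hpos : ∀ a ∈ Icc 1 (m+2), (0:ℝ) < (i:ℝ)+(a:ℕ) := by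
    intro a ha
    rw [Finset.mem_Icc] at ha
    have h1 : (1:ℝ) ≤ (a:ℝ) := by exact_mod_cast ha.1
    have h2 : (0:ℝ) ≤ (i:ℝ) := Nat.cast_nonneg i
    linarith
  have hsub : range (m+1) ⊆ range n := Finset.range_subset_range.mpr hm
  rw [← Finset.sum_subset hsub ?z]
  case z =>
    intro j hj hjn
    rw [Finset.mem_range] at hjn
    have hc : m.choose j = 0 := Nat.choose_eq_zero_of_lt (by omega)
    rw [ac, hc]
    push_cast
    ring
  have key : ∀ j ∈ range (m+1), ac m j * ((((i+j+2)*(i+j+1) : ℕ)) : ℝ)⁻¹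
      = ac m j * ((∏ a ∈ Icc 1 j, ((i:ℝ)+a)) * ∏ a ∈ Icc (j+3) (m+2), ((i:ℝ)+a))
        / ∏ a ∈ Icc 1 (m+2), ((i:ℝ)+a) := by
    intro j hj
    rw [Finset.mem_range] at hj
    have hsplit : ∏ a ∈ Icc 1 (m+2), ((i:ℝ)+a)
        = (∏ a ∈ Icc 1 j, ((i:ℝ)+a)) *
          ((((i:ℝ)+(j+1)) * ((i:ℝ)+(j+2))) * ∏ a ∈ Icc (j+3) (m+2), ((i:ℝ)+a)) := by
      rw [show Icc 1 (m+2) = Ico 1 (m+3) from (Finset.Ico_add_one_right_eq_Icc _ _).symm,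
          ← Finset.prod_Ico_consecutive (f := fun a : ℕ => (i:ℝ)+a)
            (show 1 ≤ j+1 by omega) (show j+1 ≤ m+3 by omega),
          ← Finset.prod_Ico_consecutive (f := fun a : ℕ => (i:ℝ)+a)
            (show j+1 ≤ j+3 by omega) (show j+3 ≤ m+3 by omega)]
      rw [show Finset.Ico 1 (j+1) = Icc 1 j from Finset.Ico_add_one_right_eq_Icc _ _,
          show Finset.Ico (j+3) (m+3) = Icc (j+3) (m+2) from Finset.Ico_add_one_right_eq_Icc _ _]
      have hmid : ∏ a ∈ Finset.Ico (j+1) (j+3), ((i:ℝ)+a)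
          = ((i:ℝ)+(j+1)) * ((i:ℝ)+(j+2)) := by
        rw [Finset.prod_Ico_succ_top (by omega : j+1 ≤ j+2),
            Finset.prod_Ico_succ_top (by omega : j+1 ≤ j+1), Finset.Ico_self,
            Finset.prod_empty]
        push_cast
        ring
      rw [hmid]
    have hinv : ((((i+j+2)*(i+j+1) : ℕ)) : ℝ)⁻¹
        = (((i:ℝ)+(j+1)) * ((i:ℝ)+(j+2)))⁻¹ := by
      congr 1
      push_cast
      ring
    rw [hinv, hsplit]
    have hne1 : (∏ a ∈ Icc 1 j, ((i:ℝ)+(a:ℕ))) ≠ 0 := by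
      apply _root_.ne_of_gt
      apply Finset.prod_pos
      intro a ha
      rw [Finset.mem_Icc] at ha
      have h1 : (1:ℝ) ≤ (a:ℝ) := by exact_mod_cast ha.1
      have h2 : (0:ℝ) ≤ (i:ℝ) := Nat.cast_nonneg i
      linarith
    have hne2 : (∏ a ∈ Icc (j+3) (m+2), ((i:ℝ)+(a:ℕ))) ≠ 0 := by
      apply _root_.ne_of_gt
      apply Finset.prod_pos
      intro a ha
      rw [Finset.mem_Icc] at ha
      have h1 : (1:ℝ) ≤ (a:ℝ) := by
        have : 1 ≤ a := by omega
        exact_mod_cast this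
      have h2 : (0:ℝ) ≤ (i:ℝ) := Nat.cast_nonneg i
      linarith
    have hne3 : ((i:ℝ)+(j+1)) * ((i:ℝ)+(j+2)) ≠ 0 := by
      have h2 : (0:ℝ) ≤ (i:ℝ) := Nat.cast_nonneg i
      have : (0:ℝ) < ((i:ℝ)+(j+1)) * ((i:ℝ)+(j+2)) := by positivity
      exact _root_.ne_of_gt this
    field_simp
  rw [Finset.sum_congr rfl key, ← Finset.sum_div]
  congr 1
  have hP := evalPm m (i:ℝ)
  have hRf := evalRm m (i:ℝ)
  rw [← hP, P_eq_R, hRf]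

/-- target values of `q * Cᵀ` -/
noncomputable def Tv (i m : ℕ) : ℝ :=
  (((m:ℝ)+1) * ∏ a ∈ range m, ((i:ℝ) - a)) / ∏ a ∈ Icc 1 (m+2), ((i:ℝ)+a)

lemma Tv_zero (i m : ℕ) (h : i < m) : Tv i m = 0 := by
  have : (∏ a ∈ range m, ((i:ℝ) - a)) = 0 :=
    Finset.prod_eq_zero (Finset.mem_range.mpr h) (by ring)
  rw [Tv, this, mul_zero, zero_div]

lemma ac_zero (m j : ℕ) (h : m < j) : ac m j = 0 := by
  rw [ac, Nat.choose_eq_zero_of_lt h]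
  push_cast
  ring

lemma ac_diag (m : ℕ) : ac m m = ((2*m+1).choose m : ℝ) := by
  rw [ac, Nat.choose_self, show m + m + 1 = 2*m+1 by ring]
  have : (-1:ℝ)^(m+m) = 1 := by
    rw [show m+m = 2*m by ring, pow_mul]
    norm_num
  rw [this]
  push_cast
  ring

lemma diag_fact (m : ℕ) : (2*m+2) * ((m+1) * ((2*m+1).choose m * (m ! * m !))) = (2*m+2)! := by
  have h := Nat.choose_mul_factorial_mul_factorial (show m ≤ 2*m+1 by omega)
  rw [show 2*m+1-m = m+1 by omega] at h
  calc (2*m+2) * ((m+1) * ((2*m+1).choose m * (m ! * m !)))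
      = (2*m+2) * ((2*m+1).choose m * m ! * ((m+1) * m !)) := by ring
    _ = (2*m+2) * ((2*m+1).choose m * m ! * (m+1)!) := by rw [Nat.factorial_succ]
    _ = (2*m+2) * (2*m+1)! := by rw [h]
    _ = (2*m+2)! := by rw [show 2*m+2 = (2*m+1)+1 by ring, Nat.factorial_succ (2*m+1)]

lemma acTv_diag (m : ℕ) : ac m m * Tv m m = (2*(m:ℝ)+2)⁻¹ := by
  have h1 : (∏ a ∈ range m, ((m:ℝ) - a)) = ((m ! : ℕ) : ℝ) := by
    rw [← H1 m, Nat.cast_prod]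
    apply Finset.prod_congr rfl
    intro a ha
    rw [Finset.mem_range] at ha
    have : a ≤ m := by omega
    push_cast [this]
    ring
  have h2 : (∏ a ∈ Icc 1 (m+2), ((m:ℝ)+a)) = (((2*m+2)! : ℕ) : ℝ) / ((m ! : ℕ) : ℝ) := by
    have hr := fact_ratio m (m+2)
    rw [show m + (m+2) = 2*m+2 by ring] at hr
    have hcast : ((m ! : ℕ) : ℝ) * ((∏ i ∈ range (m+2), (m+1+i) : ℕ) : ℝ)
        = (((2*m+2)! : ℕ) : ℝ) := by exact_mod_cast congrArg (Nat.cast (R := ℝ)) hr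
    have hprod : (∏ a ∈ Icc 1 (m+2), ((m:ℝ)+a)) = ((∏ i ∈ range (m+2), (m+1+i) : ℕ) : ℝ) := by
      rw [show Icc 1 (m+2) = Ico 1 (m+3) from (Finset.Ico_add_one_right_eq_Icc _ _).symm,
        Finset.prod_Ico_eq_prod_range, show m+3-1 = m+2 by omega, Nat.cast_prod]
      apply Finset.prod_congr rfl
      intro i _
      push_cast
      ring
    have hfne : ((m ! : ℕ) : ℝ) ≠ 0 := Nat.cast_ne_zero.mpr m.factorial_ne_zero
    rw [hprod, eq_div_iff hfne, mul_comm]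
    exact hcast
  have hfne : ((m ! : ℕ) : ℝ) ≠ 0 := Nat.cast_ne_zero.mpr m.factorial_ne_zero
  have h2ne : (2*(m:ℝ)+2) ≠ 0 := by positivity
  have hfac2ne : (((2*m+2)! : ℕ) : ℝ) ≠ 0 := Nat.cast_ne_zero.mpr (2*m+2).factorial_ne_zero
  rw [ac_diag, Tv, h1, h2]
  have hd := diag_fact m
  have hdc : ((2:ℝ)*m+2) * (((m:ℝ)+1) * (((2*m+1).choose m : ℕ) * (((m ! : ℕ):ℝ) * ((m ! : ℕ):ℝ))))
      = (((2*m+2)! : ℕ) : ℝ) := by exact_mod_cast congrArg (Nat.cast (R := ℝ)) hd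
  field_simp
  linear_combination hdc

end QAux

open Matrix

namespace QAux

noncomputable def Cmat (n : ℕ) : Matrix (Fin n) (Fin n) ℝ :=
  Matrix.of fun m j => ac m.val j.val

lemma qmat_entry (n : ℕ) (i j : Fin n) :
    qmat n i j = ((((i.val+j.val+2)*(i.val+j.val+1) : ℕ)) : ℝ)⁻¹ := by
  rw [qmat, Matrix.of_apply, show (i.val+1)+(j.val+1) = i.val+j.val+2 by omega,
    show i.val+j.val+2-1 = i.val+j.val+1 by omega]

lemma qmat_symm (n : ℕ) : (qmat n)ᵀ = qmat n := by
  ext i j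
  rw [Matrix.transpose_apply, qmat_entry, qmat_entry, show j.val+i.val = i.val+j.val by omega]

lemma qC (n : ℕ) : qmat n * (Cmat n)ᵀ = Matrix.of (fun i m : Fin n => Tv i.val m.val) := by
  ext i m
  rw [Matrix.mul_apply, Matrix.of_apply]
  have h : ∀ j : Fin n, qmat n i j * (Cmat n)ᵀ j m
      = ac m.val j.val * ((((i.val+j.val+2)*(i.val+j.val+1) : ℕ)) : ℝ)⁻¹ := by
    intro j
    rw [qmat_entry, Matrix.transpose_apply, Cmat, Matrix.of_apply]
    ring
  rw [Finset.sum_congr rfl (fun j _ => h j)]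
  rw [Fin.sum_univ_eq_sum_range (fun jv => ac m.val jv * ((((i.val+jv+2)*(i.val+jv+1) : ℕ)) : ℝ)⁻¹) n]
  rw [sum_q n i.val m.val m.isLt]
  rfl

lemma CqC (n : ℕ) : Cmat n * qmat n * (Cmat n)ᵀ
    = Matrix.diagonal (fun m : Fin n => (2*(m.val:ℝ)+2)⁻¹) := by
  have key : ∀ l m : Fin n, l.val ≤ m.val → (Cmat n * qmat n * (Cmat n)ᵀ) l m
      = Matrix.diagonal (fun m : Fin n => (2*(m.val:ℝ)+2)⁻¹) l m := by
    intro l m hlm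
    rw [Matrix.mul_assoc, qC, Matrix.mul_apply]
    rcases eq_or_lt_of_le hlm with heq | hlt
    · have heqf : l = m := Fin.ext heq
      subst heqf
      rw [Matrix.diagonal_apply_eq]
      rw [Finset.sum_eq_single l ?h0 ?h1]
      · rw [Cmat, Matrix.of_apply, Matrix.of_apply]
        exact acTv_diag l.val
      case h0 =>
        intro k _ hk
        rcases lt_or_gt_of_ne (fun hc : k.val = l.val => hk (Fin.ext hc)) with h | h
        · rw [Matrix.of_apply, Tv_zero k.val l.val h, mul_zero]
        · rw [Cmat, Matrix.of_apply, ac_zero l.val k.val h, zero_mul]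
      case h1 =>
        intro habs
        exact absurd (Finset.mem_univ l) habs
    · rw [Matrix.diagonal_apply_ne _ (fun hc : l = m => by rw [hc] at hlt; omega)]
      apply Finset.sum_eq_zero
      intro k _
      rcases le_or_gt k.val l.val with h | h
      · rw [Matrix.of_apply, Tv_zero k.val m.val (by omega), mul_zero]
      · rw [Cmat, Matrix.of_apply, ac_zero l.val k.val h, zero_mul]
  have hsymm : (Cmat n * qmat n * (Cmat n)ᵀ)ᵀ = Cmat n * qmat n * (Cmat n)ᵀ := by
    rw [Matrix.transpose_mul, Matrix.transpose_mul, Matrix.transpose_transpose, qmat_symm,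
      Matrix.mul_assoc]
  ext l m
  rcases le_or_gt l.val m.val with h | h
  · exact key l m h
  · have h1 : (Cmat n * qmat n * (Cmat n)ᵀ) l m = (Cmat n * qmat n * (Cmat n)ᵀ) m l := by
      conv_lhs => rw [← hsymm]
      rw [Matrix.transpose_apply]
    rw [h1, key m l (le_of_lt h), Matrix.diagonal_apply_ne _ (fun hc : m = l => by
      rw [hc] at h; omega), Matrix.diagonal_apply_ne _ (fun hc : l = m => by
      rw [hc] at h; omega)]

lemma Cmat_det_isUnit (n : ℕ) : IsUnit (Cmat n).det := by
  have htri : (Cmat n).BlockTriangular OrderDual.toDual := by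
    intro i j hij
    exact ac_zero i.val j.val (by exact_mod_cast hij)
  rw [Matrix.det_of_lowerTriangular _ htri]
  rw [isUnit_iff_ne_zero]
  apply Finset.prod_ne_zero_iff.mpr
  intro i _
  rw [Cmat, Matrix.of_apply, ac_diag]
  have : 0 < (2*i.val+1).choose i.val := Nat.choose_pos (by omega)
  positivity

lemma main (n : ℕ) : IsUnit (qmat n).det ∧
    ∀ i j : Fin n, ∃ m : ℤ, (qmat n)⁻¹ i j = 2 * (m : ℝ) := by
  have hDE : Matrix.diagonal (fun m : Fin n => (2*(m.val:ℝ)+2)⁻¹) *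
      Matrix.diagonal (fun m : Fin n => 2*(m.val:ℝ)+2) = 1 := by
    rw [Matrix.diagonal_mul_diagonal, ← Matrix.diagonal_one]
    congr 1
    funext m
    have : (2*(m.val:ℝ)+2) ≠ 0 := by positivity
    field_simp
  have hC := Cmat_det_isUnit n
  haveI := (Cmat n).invertibleOfIsUnitDet hC
  have hmain : Cmat n * (qmat n * ((Cmat n)ᵀ * Matrix.diagonal (fun m : Fin n => 2*(m.val:ℝ)+2)
      * Cmat n)) = Cmat n * 1 := by
    calc Cmat n * (qmat n * ((Cmat n)ᵀ *
          Matrix.diagonal (fun m : Fin n => 2*(m.val:ℝ)+2) * Cmat n))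
        = (Cmat n * qmat n * (Cmat n)ᵀ) *
          Matrix.diagonal (fun m : Fin n => 2*(m.val:ℝ)+2) * Cmat n := by
          simp only [Matrix.mul_assoc]
      _ = (Matrix.diagonal (fun m : Fin n => (2*(m.val:ℝ)+2)⁻¹) *
          Matrix.diagonal (fun m : Fin n => 2*(m.val:ℝ)+2)) * Cmat n := by
          rw [CqC]
      _ = Cmat n * 1 := by rw [hDE, Matrix.one_mul, Matrix.mul_one]
  have hX : qmat n * ((Cmat n)ᵀ * Matrix.diagonal (fun m : Fin n => 2*(m.val:ℝ)+2)
      * Cmat n) = 1 := by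
    calc qmat n * ((Cmat n)ᵀ * Matrix.diagonal (fun m : Fin n => 2*(m.val:ℝ)+2) * Cmat n)
        = ⅟(Cmat n) * (Cmat n * (qmat n * ((Cmat n)ᵀ *
            Matrix.diagonal (fun m : Fin n => 2*(m.val:ℝ)+2) * Cmat n))) := by
          rw [← Matrix.mul_assoc (⅟(Cmat n)) (Cmat n) _, invOf_mul_self, Matrix.one_mul]
      _ = ⅟(Cmat n) * (Cmat n * 1) := by rw [hmain]
      _ = 1 := by rw [Matrix.mul_one, invOf_mul_self]
  refine ⟨Matrix.isUnit_det_of_right_inverse hX, ?_⟩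
  intro i j
  have hinv : (qmat n)⁻¹ = (Cmat n)ᵀ * Matrix.diagonal (fun m : Fin n => 2*(m.val:ℝ)+2)
      * Cmat n := Matrix.inv_eq_right_inv hX
  refine ⟨∑ k : Fin n, ((-1)^(k.val+i.val) * (-1)^(k.val+j.val) * (k.val+1) *
    (k.val.choose i.val) * ((k.val+i.val+1).choose i.val) * (k.val.choose j.val) *
    ((k.val+j.val+1).choose j.val) : ℤ), ?_⟩
  rw [hinv]
  have hentry : ((Cmat n)ᵀ * Matrix.diagonal (fun m : Fin n => 2*(m.val:ℝ)+2) * Cmat n) i j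
      = ∑ k : Fin n, ac k.val i.val * ((2*(k.val:ℝ)+2) * ac k.val j.val) := by
    rw [Matrix.mul_assoc, Matrix.mul_apply]
    apply Finset.sum_congr rfl
    intro k _
    rw [Matrix.transpose_apply, Cmat, Matrix.of_apply]
    congr 1
    rw [Matrix.diagonal_mul]
    simp only [Cmat, Matrix.of_apply]
  rw [hentry]
  push_cast
  rw [Finset.mul_sum]
  apply Finset.sum_congr rfl
  intro k _
  rw [ac, ac]
  push_cast
  ring

end QAux


/-- The matrix `𝔮` of size `2N × 2N` is invertible, and every entry of
`𝔔 = 𝔮⁻¹` is an even integer. -/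
theorem qmat_inv_entries_even_integers (N : ℕ) (hN : 0 < N) :
    IsUnit (qmat (2 * N)).det ∧
    ∀ i j : Fin (2 * N), ∃ m : ℤ, (qmat (2 * N))⁻¹ i j = 2 * (m : ℝ) :=
  QAux.main (2 * N)
end
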